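/- arXiv:1606.05479 — 3 statements merged into one kernel-verified Lean document; each statement's English description precedes it below -/
import Mathlib

section
/- Let 1 < p ≤ q < ∞ and α < p − 1. Let (λ_k)_{k∈ℕ} be a sequence in the open left half-plane and (b_k)_{k∈ℕ} a sequence of complex numbers, and suppose there exists 0 < θ < π/2 such that −λ_k ∈ S(θ) (equivalently |Im(−λ_k)| < Re(−λ_k) tan θ) for all k ∈ ℕ. Let μ := Σ_{k=1}^∞ |b_k|^q δ_{−λ_k}. Then the Laplace–Carleson embedding 𝔏 : L^p_{t^α}(0,∞) → L^q(ℂ₊, μ) is bounded (equivalently, the control operator with coefficients (b_k) is L^p_{t^α}-admissible for the diagonal semigroup with eigenvalues (λ_k)) if and only if there exists a constant C > 0 such that for every nonempty subset Γ ⊆ ℕ, Σ_{k∈Γ} |b_k|^q ≤ C · sup_{k∈Γ} (Re(−λ_k))^{(q/p′)(1 − α/(p−1))}. -/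
open MeasureTheory Set Complex Filter ENNReal

/-- The Laplace transform of `f : (0,∞) → ℂ` at `z`. -/
noncomputable def laplaceT (f : ℝ → ℂ) (z : ℂ) : ℂ :=
  ∫ t in Set.Ioi (0:ℝ), f t * Complex.exp (-(t : ℂ) * z)

/-- The norm of `f` in the weighted space `L^p_w(0,∞)` (as an extended real). -/
noncomputable def lpwNorm (p : ℝ) (w : ℝ → ℝ) (f : ℝ → ℂ) : ℝ≥0∞ :=
  (∫⁻ t in Set.Ioi (0:ℝ), (‖f t‖₊ : ℝ≥0∞) ^ p * ENNReal.ofReal (w t)) ^ (1/p)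

/-- Boundedness of the Laplace–Carleson embedding `𝔏 : L^p_w(0,∞) → L^q(ℂ₊, μ)`. -/
def lcBounded (p q : ℝ) (w : ℝ → ℝ) (μ : Measure ℂ) : Prop :=
  ∃ C > 0, ∀ f : ℝ → ℂ, Measurable f →
    (∫⁻ z, (‖laplaceT f z‖₊ : ℝ≥0∞) ^ q ∂μ) ^ (1/q) ≤ ENNReal.ofReal C * lpwNorm p w f

/-- The sector `S(θ) = {z ∈ ℂ₊ : |arg z| < θ}`. -/
def sector (θ : ℝ) : Set ℂ := {z : ℂ | 0 < z.re ∧ |Complex.arg z| < θ}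

/-- The truncated sector `Δ_r = {z ∈ S(θ) : Re z ≤ r}`. -/
def sectorDelta (θ r : ℝ) : Set ℂ := {z ∈ sector θ | z.re ≤ r}

section Aux

-- exponent rewrite
lemma exp_rw (p q α : ℝ) (hp : 1 < p) :
    (q / (p / (p - 1))) * (1 - α / (p - 1)) = q * ((p - 1 - α) / p) := by
  have h1 : p - 1 ≠ 0 := by nlinarith
  have h2 : p ≠ 0 := by nlinarith
  field_simp

-- integral against μ
lemma muInt (b : ℕ → ℂ) (q : ℝ) (lam : ℕ → ℂ) (g : ℂ → ℝ≥0∞) :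
    ∫⁻ z, g z ∂(Measure.sum fun k : ℕ =>
      (ENNReal.ofReal (‖b k‖ ^ q)) • Measure.dirac (-(lam k)))
      = ∑' k, ENNReal.ofReal (‖b k‖ ^ q) * g (-(lam k)) := by
  rw [lintegral_sum_measure]
  congr 1; ext k
  rw [lintegral_smul_measure, lintegral_dirac, smul_eq_mul]

-- pointwise Laplace bound
lemma laplace_ptwise (f : ℝ → ℂ) (z : ℂ) :
    (‖laplaceT f z‖₊ : ℝ≥0∞) ≤
      ∫⁻ t in Set.Ioi (0:ℝ), (‖f t‖₊ : ℝ≥0∞) * ENNReal.ofReal (Real.exp (-(t * z.re))) := by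
  refine le_trans (enorm_integral_le_lintegral_enorm _) (le_of_eq ?_)
  refine setLIntegral_congr_fun measurableSet_Ioi (fun t ht => ?_)
  rw [enorm_eq_nnnorm, nnnorm_mul, ENNReal.coe_mul]
  congr 1
  rw [← (ofReal_norm _).trans (enorm_eq_nnnorm _), Complex.norm_exp]
  congr 1
  simp [Complex.mul_re]

lemma zmeas (f : ℤ → ℝ≥0∞) : Measurable f := measurable_from_top

lemma tsum_holder {s s' : ℝ} (h : s.HolderConjugate s') (a y : ℤ → ℝ≥0∞) :
    ∑' i, a i * y i ≤ (∑' i, a i * (y i)^s)^(1/s) * (∑' i, a i)^(1/s') := by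
  have hs := h.pos
  have hs' := h.symm.pos
  have hs0 : (0:ℝ) ≤ 1/s := by positivity
  have hs0' : (0:ℝ) ≤ 1/s' := by positivity
  have key := ENNReal.lintegral_mul_le_Lp_mul_Lq (Measure.count : Measure ℤ) h
    (f := fun i => (a i)^(1/s) * y i) (g := fun i => (a i)^(1/s'))
    (zmeas _).aemeasurable (zmeas _).aemeasurable
  simp only [lintegral_count, Pi.mul_apply] at key
  have e1 : ∀ i, (a i)^(1/s) * y i * (a i)^(1/s') = a i * y i := by
    intro i
    have h2 : (a i)^(1/s) * (a i)^(1/s') = a i := by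
      rw [← ENNReal.rpow_add_of_nonneg _ _ hs0 hs0']
      rw [show 1/s + 1/s' = 1 by rw [one_div, one_div]; exact h.inv_add_inv_eq_one, ENNReal.rpow_one]
    calc (a i)^(1/s) * y i * (a i)^(1/s') = ((a i)^(1/s) * (a i)^(1/s')) * y i := by ring
    _ = a i * y i := by rw [h2]
  have e2 : ∀ i, ((a i)^(1/s) * y i)^s = a i * (y i)^s := by
    intro i
    rw [ENNReal.mul_rpow_of_nonneg _ _ h.nonneg, ← ENNReal.rpow_mul]
    rw [show 1/s * s = 1 by field_simp, ENNReal.rpow_one]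
  have e3 : ∀ i, ((a i)^(1/s'))^s' = a i := by
    intro i
    rw [← ENNReal.rpow_mul, show 1/s' * s' = 1 by field_simp, ENNReal.rpow_one]
  calc ∑' i, a i * y i = ∑' i, (a i)^(1/s) * y i * (a i)^(1/s') := by
        simp only [e1]
    _ ≤ _ := key
    _ = (∑' i, a i * (y i)^s)^(1/s) * (∑' i, a i)^(1/s') := by
        simp only [e2, e3]

lemma jensen_tsum {s : ℝ} (hs : 1 ≤ s) (a y : ℤ → ℝ≥0∞) :
    (∑' i, a i * y i)^s ≤ (∑' i, a i)^(s-1) * ∑' i, a i * (y i)^s := by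
  rcases eq_or_lt_of_le hs with h1 | h1
  · simp [← h1]
  · have hc : s.HolderConjugate (s/(s-1)) := Real.HolderConjugate.conjExponent h1
    have h2 := tsum_holder hc a y
    have h3 := ENNReal.rpow_le_rpow h2 (le_of_lt hc.pos)
    refine le_trans h3 (le_of_eq ?_)
    rw [ENNReal.mul_rpow_of_nonneg _ _ hc.nonneg, ← ENNReal.rpow_mul, ← ENNReal.rpow_mul]
    rw [show 1/s * s = 1 by field_simp, ENNReal.rpow_one]
    rw [show 1/(s/(s-1)) * s = s - 1 by field_simp]
    ring

lemma rpow_split {s : ℝ} (hs : 1 ≤ s) (x : ℝ≥0∞) : x^s = x^(s-1) * x := by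
  calc x^s = x^((s-1)+1) := by ring_nf
    _ = x^(s-1) * x^(1:ℝ) := ENNReal.rpow_add_of_nonneg _ _ (by linarith) zero_le_one
    _ = x^(s-1) * x := by rw [ENNReal.rpow_one]

lemma tsum_rpow_le {s : ℝ} (hs : 1 ≤ s) (y : ℤ → ℝ≥0∞) :
    ∑' i, (y i)^s ≤ (∑' i, y i)^s := by
  calc ∑' i, (y i)^s = ∑' i, (y i)^(s-1) * y i := by
        congr 1; ext i; exact rpow_split hs _
    _ ≤ ∑' i, (∑' j, y j)^(s-1) * y i := by
        refine ENNReal.tsum_le_tsum fun i => ?_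
        exact mul_le_mul_left (ENNReal.rpow_le_rpow (ENNReal.le_tsum i) (by linarith)) _
    _ = (∑' j, y j)^(s-1) * ∑' i, y i := ENNReal.tsum_mul_left
    _ = (∑' i, y i)^s := (rpow_split hs _).symm

noncomputable def dy (j : ℤ) : ℝ := (2:ℝ)^j

lemma dy_pos (j : ℤ) : 0 < dy j := zpow_pos (by norm_num) j

lemma dy_rpow (j : ℤ) : dy j = (2:ℝ)^((j:ℝ)) := (Real.rpow_intCast 2 j).symm

lemma dy_mem (t : ℝ) (ht : 0 < t) :
    dy ⌊Real.logb 2 t⌋ ≤ t ∧ t < dy (⌊Real.logb 2 t⌋ + 1) := by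
  have h2 : (1:ℝ) < 2 := one_lt_two
  constructor
  · rw [dy_rpow]
    calc (2:ℝ)^((⌊Real.logb 2 t⌋:ℝ)) ≤ (2:ℝ)^(Real.logb 2 t) := by
          apply Real.rpow_le_rpow_of_exponent_le (le_of_lt h2) (Int.floor_le _)
      _ = t := Real.rpow_logb (by norm_num) (by norm_num) ht
  · rw [dy_rpow]
    calc t = (2:ℝ)^(Real.logb 2 t) := (Real.rpow_logb (by norm_num) (by norm_num) ht).symm
      _ < (2:ℝ)^((((⌊Real.logb 2 t⌋ + 1):ℤ):ℝ)) := by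
          apply Real.rpow_lt_rpow_of_exponent_lt h2
          push_cast
          exact Int.lt_floor_add_one _
  
lemma Ioi_union : Set.Ioi (0:ℝ) = ⋃ j : ℤ, Set.Ico (dy j) (dy (j+1)) := by
  ext t
  simp only [Set.mem_Ioi, Set.mem_iUnion, Set.mem_Ico]
  constructor
  · intro ht
    exact ⟨⌊Real.logb 2 t⌋, (dy_mem t ht).1, (dy_mem t ht).2⟩
  · rintro ⟨j, h1, _⟩
    exact lt_of_lt_of_le (dy_pos j) h1

lemma dy_mono : StrictMono dy := fun i j h => zpow_lt_zpow_right₀ one_lt_two h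

lemma Ico_disj' {i j : ℤ} (h : i < j) :
    Disjoint (Set.Ico (dy i) (dy (i+1))) (Set.Ico (dy j) (dy (j+1))) := by
  apply Set.disjoint_left.mpr
  rintro t ⟨_, h2⟩ ⟨h3, _⟩
  have : dy (i+1) ≤ dy j := dy_mono.monotone (by omega)
  linarith

lemma Ico_disj : Pairwise (Function.onFun Disjoint fun j : ℤ => Set.Ico (dy j) (dy (j+1))) := by
  intro i j hij
  rcases lt_or_gt_of_ne hij with h | h
  · exact Ico_disj' h
  · exact (Ico_disj' h).symm

lemma summable_wexp (γ : ℝ) (hγ : 0 < γ) :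
    Summable (fun i : ℤ => (2:ℝ)^((i:ℝ)*γ) * Real.exp (-dy i)) := by
  set m : ℕ := ⌈γ⌉₊ + 1 with hm
  have hγm : γ - (m:ℝ) ≤ -1 := by
    have : γ ≤ (⌈γ⌉₊:ℝ) := Nat.le_ceil γ
    push_cast [hm]
    linarith
  apply Summable.of_nat_of_neg
  · -- positive side
    refine Summable.of_nonneg_of_le (f := fun n : ℕ => (m.factorial : ℝ) * ((2:ℝ)^(γ - (m:ℝ)))^n)
      (fun n => by positivity) ?_ ?_
    · intro n
      have hcast : (((n:ℤ)):ℝ) = (n:ℝ) := by push_cast; ring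
      have hdy : dy (n:ℤ) = (2:ℝ)^((n:ℝ)) := by rw [dy_rpow, hcast]
      have hpow : (2:ℝ)^((n:ℝ)*(m:ℝ)) = ((2:ℝ)^((n:ℝ)))^m := by
        rw [Real.rpow_mul (by norm_num), Real.rpow_natCast]
      have hexp : Real.exp (-dy (n:ℤ)) ≤ (m.factorial:ℝ) / ((2:ℝ)^((n:ℝ)*(m:ℝ))) := by
        have h1 : ((2:ℝ)^((n:ℝ)))^m / (m.factorial:ℝ) ≤ Real.exp ((2:ℝ)^((n:ℝ))) := by
          have h0 := Real.sum_le_exp_of_nonneg (x := (2:ℝ)^((n:ℝ))) (by positivity) (m+1)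
          refine le_trans ?_ h0
          exact Finset.single_le_sum (f := fun i => ((2:ℝ)^((n:ℝ)))^i / (i.factorial:ℝ))
            (fun i _ => by positivity) (Finset.self_mem_range_succ m)
        rw [div_le_iff₀ (by positivity)] at h1
        rw [Real.exp_neg, hdy, hpow, inv_eq_one_div,
          div_le_div_iff₀ (Real.exp_pos _) (by positivity)]
        nlinarith [h1]
      calc (2:ℝ)^(((n:ℤ):ℝ)*γ) * Real.exp (-dy (n:ℤ))
          ≤ (2:ℝ)^((n:ℝ)*γ) * ((m.factorial:ℝ) / ((2:ℝ)^((n:ℝ)*(m:ℝ)))) := by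
            rw [hcast]
            exact mul_le_mul_of_nonneg_left hexp (by positivity)
        _ = (m.factorial:ℝ) * ((2:ℝ)^((n:ℝ)*γ) * (2:ℝ)^(-((n:ℝ)*(m:ℝ)))) := by
            rw [div_eq_mul_inv, ← Real.rpow_neg (by norm_num)]
            ring
        _ = (m.factorial : ℝ) * ((2:ℝ)^(γ - (m:ℝ)))^n := by
            rw [← Real.rpow_add (by norm_num : (0:ℝ) < 2),
              ← Real.rpow_natCast ((2:ℝ)^(γ - (m:ℝ))) n, ← Real.rpow_mul (by norm_num)]
            congr 1
            ring
    · exact (summable_geometric_of_lt_one (by positivity) (by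
        calc (2:ℝ)^(γ-(m:ℝ)) ≤ (2:ℝ)^(-1:ℝ) := Real.rpow_le_rpow_of_exponent_le one_le_two hγm
          _ < 1 := by
            rw [Real.rpow_neg_one]; norm_num)).mul_left _
  · -- negative side
    refine Summable.of_nonneg_of_le (f := fun n : ℕ => ((2:ℝ)^(-γ))^n)
      (fun n => by positivity) ?_ ?_
    · intro n
      calc (2:ℝ)^(((-n:ℤ):ℝ)*γ) * Real.exp (-dy (-n:ℤ))
          ≤ (2:ℝ)^(((-n:ℤ):ℝ)*γ) * 1 := by
            apply mul_le_mul_of_nonneg_left _ (by positivity)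
            rw [Real.exp_le_one_iff]
            simp [le_of_lt (dy_pos _)]
        _ = ((2:ℝ)^(-γ))^n := by
            rw [mul_one, ← Real.rpow_natCast ((2:ℝ)^(-γ)) n, ← Real.rpow_mul (by norm_num)]
            push_cast
            ring_nf
    · exact summable_geometric_of_lt_one (by positivity) (by
        rw [Real.rpow_neg (by norm_num), inv_lt_one_iff₀]
        right
        exact Real.one_lt_rpow_iff_of_pos (by norm_num) |>.mpr (Or.inl ⟨one_lt_two, hγ⟩))

section Suff

-- the dyadic pieces of the weighted p-norm
noncomputable def vj (p α : ℝ) (f : ℝ → ℂ) (j : ℤ) : ℝ≥0∞ :=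
  ∫⁻ t in Set.Ico (dy j) (dy (j+1)), (‖f t‖₊ : ℝ≥0∞) ^ p * ENNReal.ofReal (t ^ α)

lemma Ndecomp (p α : ℝ) (f : ℝ → ℂ) :
    ∫⁻ t in Set.Ioi (0:ℝ), (‖f t‖₊ : ℝ≥0∞) ^ p * ENNReal.ofReal (t ^ α) = ∑' j, vj p α f j := by
  rw [Ioi_union, lintegral_iUnion (fun j => measurableSet_Ico) Ico_disj]
  rfl

lemma c_bound {p α : ℝ} (hp : 1 < p) (f : ℝ → ℂ) (hf : Measurable f) (j : ℤ) :
    ∫⁻ t in Set.Ico (dy j) (dy (j+1)), (‖f t‖₊ : ℝ≥0∞) ≤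
      (vj p α f j) ^ (1/p) *
        ENNReal.ofReal ((2:ℝ) ^ (|(-α/(p-1))| / (p/(p-1))) * (dy j) ^ ((p-1-α)/p)) := by
  have hp0 : (0:ℝ) < p := by linarith
  have hp1 : p - 1 ≠ 0 := by nlinarith
  set p' : ℝ := p/(p-1) with hp'
  have hp'0 : (0:ℝ) < p' := by
    apply div_pos <;> linarith
  have hconj : p.HolderConjugate p' := Real.HolderConjugate.conjExponent hp
  set δ : ℝ := -α/(p-1) with hδ
  set I := Set.Ico (dy j) (dy (j+1)) with hI
  have hmeas1 : Measurable fun t : ℝ => (‖f t‖₊ : ℝ≥0∞) * ENNReal.ofReal (t ^ (α/p)) :=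
    hf.nnnorm.coe_nnreal_ennreal.mul ((measurable_id'.pow_const (α/p)).ennreal_ofReal)
  have hmeas2 : Measurable fun t : ℝ => ENNReal.ofReal (t ^ (-α/p)) :=
    (measurable_id'.pow_const (-α/p)).ennreal_ofReal
  have key := ENNReal.lintegral_mul_le_Lp_mul_Lq (volume.restrict I) hconj
    hmeas1.aemeasurable hmeas2.aemeasurable
  -- rewrite left side
  have hL : ∫⁻ t in I, ((fun t : ℝ => (‖f t‖₊ : ℝ≥0∞) * ENNReal.ofReal (t ^ (α/p))) *
      (fun t : ℝ => ENNReal.ofReal (t ^ (-α/p)))) t = ∫⁻ t in I, (‖f t‖₊ : ℝ≥0∞) := by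
    refine setLIntegral_congr_fun measurableSet_Ico
      (fun t ht => ?_)
    have ht0 : 0 < t := lt_of_lt_of_le (dy_pos j) ht.1
    simp only [Pi.mul_apply]
    rw [mul_assoc, ← ENNReal.ofReal_mul (by positivity), ← Real.rpow_add ht0,
      show α/p + -α/p = 0 by ring, Real.rpow_zero, ENNReal.ofReal_one, mul_one]
  -- rewrite first factor
  have hF1 : ∫⁻ t in I, ((‖f t‖₊ : ℝ≥0∞) * ENNReal.ofReal (t ^ (α/p))) ^ p = vj p α f j := by
    refine setLIntegral_congr_fun measurableSet_Ico
      (fun t ht => ?_)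
    have ht0 : 0 < t := lt_of_lt_of_le (dy_pos j) ht.1
    rw [ENNReal.mul_rpow_of_nonneg _ _ hp0.le, ENNReal.ofReal_rpow_of_pos (by positivity),
      ← Real.rpow_mul ht0.le, show α/p * p = α by field_simp]
  -- bound second factor
  have hδ1 : (δ + 1)/p' = (p-1-α)/p := by
    rw [hδ, hp']
    field_simp
    ring
  have hb : ∀ t ∈ I, t^δ ≤ (2:ℝ)^|δ| * (dy j)^δ := by
    intro t ht
    have ht0 : 0 < t := lt_of_lt_of_le (dy_pos j) ht.1
    rcases le_or_gt 0 δ with h | h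
    · have h1 : t^δ ≤ (dy (j+1))^δ := Real.rpow_le_rpow ht0.le (le_of_lt ht.2) h
      have h2 : dy (j+1) = 2 * dy j := by
        rw [dy]; rw [dy]; rw [zpow_add_one₀ (by norm_num : (2:ℝ) ≠ 0)]; ring
      calc t^δ ≤ (2 * dy j)^δ := h2 ▸ h1
        _ = (2:ℝ)^δ * (dy j)^δ := Real.mul_rpow (by norm_num) (dy_pos j).le
        _ = (2:ℝ)^|δ| * (dy j)^δ := by rw [_root_.abs_of_nonneg h]
    · have h1 : t^δ ≤ (dy j)^δ := Real.rpow_le_rpow_of_nonpos (dy_pos j) ht.1 h.le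
      have h2 : (1:ℝ) ≤ (2:ℝ)^|δ| := by
        calc (1:ℝ) = (2:ℝ)^(0:ℝ) := by norm_num
          _ ≤ (2:ℝ)^|δ| := Real.rpow_le_rpow_of_exponent_le one_le_two (abs_nonneg δ)
      nlinarith [Real.rpow_pos_of_pos (dy_pos j) δ, Real.rpow_pos_of_pos ht0 δ]
  have hF2 : (∫⁻ t in I, (ENNReal.ofReal (t ^ (-α/p))) ^ p') ^ (1/p')
      ≤ ENNReal.ofReal ((2:ℝ) ^ (|δ| / p') * (dy j) ^ ((p-1-α)/p)) := by
    have e1 : ∫⁻ t in I, (ENNReal.ofReal (t ^ (-α/p))) ^ p' = ∫⁻ t in I, ENNReal.ofReal (t ^ δ) := by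
      refine setLIntegral_congr_fun measurableSet_Ico
        (fun t ht => ?_)
      have ht0 : 0 < t := lt_of_lt_of_le (dy_pos j) ht.1
      rw [ENNReal.ofReal_rpow_of_pos (by positivity),
        ← Real.rpow_mul ht0.le, show -α/p * p' = δ by rw [hp', hδ]; field_simp]
    have e2 : ∫⁻ t in I, ENNReal.ofReal (t ^ δ) ≤
        ENNReal.ofReal ((2:ℝ)^|δ| * (dy j)^δ) * volume I := by
      calc ∫⁻ t in I, ENNReal.ofReal (t ^ δ)
          ≤ ∫⁻ _ in I, ENNReal.ofReal ((2:ℝ)^|δ| * (dy j)^δ) :=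
            setLIntegral_mono measurable_const fun t ht => ENNReal.ofReal_le_ofReal (hb t ht)
        _ = ENNReal.ofReal ((2:ℝ)^|δ| * (dy j)^δ) * volume I := setLIntegral_const _ _
    have e3 : volume I = ENNReal.ofReal (dy j) := by
      rw [hI, Real.volume_Ico]
      congr 1
      rw [dy]; rw [dy]; rw [zpow_add_one₀ (by norm_num : (2:ℝ) ≠ 0)]; ring
    have e4 : ENNReal.ofReal ((2:ℝ)^|δ| * (dy j)^δ) * volume I =
        ENNReal.ofReal ((2:ℝ)^|δ| * (dy j)^(δ+1)) := by
      rw [e3, ← ENNReal.ofReal_mul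
        (mul_pos (Real.rpow_pos_of_pos two_pos _) (Real.rpow_pos_of_pos (dy_pos j) _)).le, mul_assoc,
        ← Real.rpow_add_one (dy_pos j).ne']
    calc (∫⁻ t in I, (ENNReal.ofReal (t ^ (-α/p))) ^ p') ^ (1/p')
        ≤ (ENNReal.ofReal ((2:ℝ)^|δ| * (dy j)^(δ+1))) ^ (1/p') := by
          rw [e1]
          exact ENNReal.rpow_le_rpow (le_trans e2 (le_of_eq e4)) (by positivity)
      _ = ENNReal.ofReal ((2:ℝ) ^ (|δ| / p') * (dy j) ^ ((p-1-α)/p)) := by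
          rw [ENNReal.ofReal_rpow_of_pos
              (mul_pos (Real.rpow_pos_of_pos two_pos _) (Real.rpow_pos_of_pos (dy_pos j) _)),
            Real.mul_rpow (Real.rpow_pos_of_pos two_pos _).le
              (Real.rpow_pos_of_pos (dy_pos j) _).le,
            ← Real.rpow_mul (by norm_num : (0:ℝ) ≤ 2),
            ← Real.rpow_mul (dy_pos j).le]
          rw [show |δ| * (1/p') = |δ|/p' by ring, show (δ+1) * (1/p') = (δ+1)/p' by ring, hδ1]
  calc ∫⁻ t in I, (‖f t‖₊ : ℝ≥0∞) = _ := hL.symm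
    _ ≤ _ := key
    _ ≤ (vj p α f j) ^ (1/p) * ENNReal.ofReal ((2:ℝ) ^ (|δ| / p') * (dy j) ^ ((p-1-α)/p)) := by
        rw [hF1]
        exact mul_le_mul_right hF2 _
  
noncomputable def aw (γ : ℝ) (i : ℤ) : ℝ≥0∞ :=
  ENNReal.ofReal ((2:ℝ)^((i:ℝ)*γ) * Real.exp (-dy i))

lemma aw_shift (γ : ℝ) (n : ℤ) : ∑' j, aw γ (n+j) = ∑' i, aw γ i := by
  have := Equiv.tsum_eq (Equiv.addLeft n) (aw γ)
  simpa using this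

lemma aw_sum_ne_top {γ : ℝ} (hγ : 0 < γ) : ∑' i, aw γ i ≠ ∞ := by
  simp only [aw]
  rw [← ENNReal.ofReal_tsum_of_nonneg (fun i => by positivity) (summable_wexp γ hγ)]
  exact ENNReal.ofReal_ne_top

lemma G_le {p q α : ℝ} (hp : 1 < p) (hpq : p ≤ q) (hα : α < p - 1)
    (f : ℝ → ℂ) (hf : Measurable f) (n : ℤ) (ρ : ℝ) (hρ : dy n ≤ ρ) :
    (∫⁻ t in Set.Ioi (0:ℝ), (‖f t‖₊ : ℝ≥0∞) * ENNReal.ofReal (Real.exp (-(t * ρ)))) ^ q ≤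
      (ENNReal.ofReal ((2:ℝ) ^ (|(-α/(p-1))| / (p/(p-1))))) ^ q * (∑' i, aw ((p-1-α)/p) i) ^ (q-1)
        * ENNReal.ofReal ((2:ℝ) ^ (-(n:ℝ) * (q*((p-1-α)/p))))
        * ∑' j, aw ((p-1-α)/p) (n+j) * (vj p α f j) ^ (q/p) := by
  set γ : ℝ := (p-1-α)/p with hγdef
  have hγ : 0 < γ := by
    apply div_pos (by linarith) (by linarith)
  have hq1 : 1 ≤ q := by linarith
  have hq0 : 0 < q := by linarith
  set Kw : ℝ := (2:ℝ) ^ (|(-α/(p-1))| / (p/(p-1))) with hKw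
  set S : ℝ≥0∞ := ∑' i, aw γ i with hS
  -- step 1: decompose and bound G
  have step1 : (∫⁻ t in Set.Ioi (0:ℝ), (‖f t‖₊ : ℝ≥0∞) * ENNReal.ofReal (Real.exp (-(t * ρ))))
      ≤ ENNReal.ofReal Kw * ENNReal.ofReal ((2:ℝ) ^ (-(n:ℝ) * γ)) *
        ∑' j, aw γ (n+j) * (vj p α f j) ^ (1/p) := by
    rw [Ioi_union, lintegral_iUnion (fun j => measurableSet_Ico) Ico_disj]
    have hterm : ∀ j : ℤ,
        (∫⁻ t in Set.Ico (dy j) (dy (j+1)), (‖f t‖₊ : ℝ≥0∞) * ENNReal.ofReal (Real.exp (-(t * ρ))))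
        ≤ ENNReal.ofReal Kw * ENNReal.ofReal ((2:ℝ) ^ (-(n:ℝ) * γ)) *
          (aw γ (n+j) * (vj p α f j) ^ (1/p)) := by
      intro j
      have h1 : (∫⁻ t in Set.Ico (dy j) (dy (j+1)),
          (‖f t‖₊ : ℝ≥0∞) * ENNReal.ofReal (Real.exp (-(t * ρ))))
          ≤ ENNReal.ofReal (Real.exp (-dy (n+j))) *
            ∫⁻ t in Set.Ico (dy j) (dy (j+1)), (‖f t‖₊ : ℝ≥0∞) := by
        rw [← lintegral_const_mul _ hf.nnnorm.coe_nnreal_ennreal]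
        refine setLIntegral_mono (measurable_const.mul hf.nnnorm.coe_nnreal_ennreal)
          (fun t ht => ?_)
        rw [mul_comm ((‖f t‖₊ : ℝ≥0∞)) _]
        apply mul_le_mul_left
        apply ENNReal.ofReal_le_ofReal
        apply Real.exp_le_exp.mpr
        have h2 : dy (n+j) ≤ t * ρ := by
          have h3 : dy n * dy j ≤ ρ * t :=
            mul_le_mul hρ ht.1 (dy_pos j).le (le_trans (dy_pos n).le hρ)
          calc dy (n+j) = dy n * dy j := by
                rw [dy]; rw [dy]; rw [dy]; rw [zpow_add₀ (by norm_num : (2:ℝ) ≠ 0)]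
            _ ≤ ρ * t := h3
            _ = t * ρ := by ring
        linarith
      refine le_trans h1 ?_
      have hcb := c_bound (α := α) hp f hf j
      have h4 : ENNReal.ofReal (Real.exp (-dy (n+j))) *
          ((vj p α f j) ^ (1/p) *
            ENNReal.ofReal ((2:ℝ) ^ (|(-α/(p-1))| / (p/(p-1))) * (dy j) ^ ((p-1-α)/p)))
          = ENNReal.ofReal Kw * ENNReal.ofReal ((2:ℝ) ^ (-(n:ℝ) * γ)) *
            (aw γ (n+j) * (vj p α f j) ^ (1/p)) := by
        have hreal : Real.exp (-dy (n+j)) * ((2:ℝ) ^ (|(-α/(p-1))| / (p/(p-1))) * (dy j) ^ γ)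
            = Kw * ((2:ℝ) ^ (-(n:ℝ)*γ) * ((2:ℝ)^((((n+j):ℤ):ℝ)*γ) * Real.exp (-dy (n+j)))) := by
          have e2 : (dy j) ^ γ = (2:ℝ) ^ ((j:ℝ) * γ) := by
            rw [dy_rpow, ← Real.rpow_mul (by norm_num : (0:ℝ) ≤ 2)]
          have e3 : (2:ℝ)^(-(n:ℝ)*γ) * (2:ℝ)^((((n+j):ℤ):ℝ)*γ) = (2:ℝ)^((j:ℝ)*γ) := by
            rw [← Real.rpow_add two_pos]
            congr 1
            push_cast
            ring
          rw [e2, ← e3, hKw]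
          ring
        calc ENNReal.ofReal (Real.exp (-dy (n+j))) *
            ((vj p α f j) ^ (1/p) *
              ENNReal.ofReal ((2:ℝ) ^ (|(-α/(p-1))| / (p/(p-1))) * (dy j) ^ ((p-1-α)/p)))
            = (ENNReal.ofReal (Real.exp (-dy (n+j))) *
              ENNReal.ofReal ((2:ℝ) ^ (|(-α/(p-1))| / (p/(p-1))) * (dy j) ^ ((p-1-α)/p))) *
              (vj p α f j) ^ (1/p) := by ring
          _ = ENNReal.ofReal (Real.exp (-dy (n+j)) *
                ((2:ℝ) ^ (|(-α/(p-1))| / (p/(p-1))) * (dy j) ^ γ)) * (vj p α f j) ^ (1/p) := by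
              rw [← ENNReal.ofReal_mul (Real.exp_pos _).le]
          _ = ENNReal.ofReal (Kw * ((2:ℝ) ^ (-(n:ℝ)*γ) *
                ((2:ℝ)^((((n+j):ℤ):ℝ)*γ) * Real.exp (-dy (n+j))))) * (vj p α f j) ^ (1/p) := by
              rw [hreal]
          _ = (ENNReal.ofReal Kw * (ENNReal.ofReal ((2:ℝ) ^ (-(n:ℝ)*γ)) *
                ENNReal.ofReal ((2:ℝ)^((((n+j):ℤ):ℝ)*γ) * Real.exp (-dy (n+j))))) *
                (vj p α f j) ^ (1/p) := by
              rw [← ENNReal.ofReal_mul (by positivity), ← ENNReal.ofReal_mul (by positivity)]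
          _ = ENNReal.ofReal Kw * ENNReal.ofReal ((2:ℝ) ^ (-(n:ℝ) * γ)) *
              (aw γ (n+j) * (vj p α f j) ^ (1/p)) := by
              rw [aw]
              ring
      calc ENNReal.ofReal (Real.exp (-dy (n+j))) *
            ∫⁻ t in Set.Ico (dy j) (dy (j+1)), (‖f t‖₊ : ℝ≥0∞)
          ≤ ENNReal.ofReal (Real.exp (-dy (n+j))) *
            ((vj p α f j) ^ (1/p) *
              ENNReal.ofReal ((2:ℝ) ^ (|(-α/(p-1))| / (p/(p-1))) * (dy j) ^ ((p-1-α)/p))) :=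
            mul_le_mul_right hcb _
        _ = _ := h4
    calc ∑' j, (∫⁻ t in Set.Ico (dy j) (dy (j+1)),
          (‖f t‖₊ : ℝ≥0∞) * ENNReal.ofReal (Real.exp (-(t * ρ))))
        ≤ ∑' j, ENNReal.ofReal Kw * ENNReal.ofReal ((2:ℝ) ^ (-(n:ℝ) * γ)) *
          (aw γ (n+j) * (vj p α f j) ^ (1/p)) := ENNReal.tsum_le_tsum hterm
      _ = ENNReal.ofReal Kw * ENNReal.ofReal ((2:ℝ) ^ (-(n:ℝ) * γ)) *
          ∑' j, aw γ (n+j) * (vj p α f j) ^ (1/p) := ENNReal.tsum_mul_left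
  -- step 2: raise to q and Jensen
  have step2 := ENNReal.rpow_le_rpow step1 hq0.le
  refine le_trans step2 ?_
  rw [ENNReal.mul_rpow_of_nonneg _ _ hq0.le, ENNReal.mul_rpow_of_nonneg _ _ hq0.le]
  have hJ := jensen_tsum hq1 (fun j => aw γ (n+j)) (fun j => (vj p α f j) ^ (1/p))
  rw [aw_shift γ n] at hJ
  have hJ2 : (∑' j, aw γ (n+j) * ((vj p α f j) ^ (1/p))) ^ q ≤
      S ^ (q-1) * ∑' j, aw γ (n+j) * (vj p α f j) ^ (q/p) := by
    refine le_trans hJ (le_of_eq ?_)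
    congr 1
    congr 1
    ext j
    rw [← ENNReal.rpow_mul, show 1/p * q = q/p by ring]
  have e5 : (ENNReal.ofReal ((2:ℝ) ^ (-(n:ℝ) * γ))) ^ q =
      ENNReal.ofReal ((2:ℝ) ^ (-(n:ℝ) * (q * γ))) := by
    rw [ENNReal.ofReal_rpow_of_pos (Real.rpow_pos_of_pos two_pos _),
      ← Real.rpow_mul (by norm_num : (0:ℝ) ≤ 2), show -(n:ℝ)*γ*q = -(n:ℝ)*(q*γ) by ring]
  calc (ENNReal.ofReal Kw)^q * (ENNReal.ofReal ((2:ℝ)^(-(n:ℝ)*γ)))^q *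
        (∑' j, aw γ (n+j) * (vj p α f j) ^ (1/p)) ^ q
      ≤ (ENNReal.ofReal Kw)^q * (ENNReal.ofReal ((2:ℝ)^(-(n:ℝ)*γ)))^q *
        (S ^ (q-1) * ∑' j, aw γ (n+j) * (vj p α f j) ^ (q/p)) := mul_le_mul_right hJ2 _
    _ = (ENNReal.ofReal Kw)^q * S^(q-1) * ENNReal.ofReal ((2:ℝ)^(-(n:ℝ)*(q*γ)))
        * ∑' j, aw γ (n+j) * (vj p α f j) ^ (q/p) := by
      rw [e5]; ring

lemma sufficiency {p q α : ℝ} (hp : 1 < p) (hpq : p ≤ q) (hα : α < p - 1)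
    (lam : ℕ → ℂ) (hlam : ∀ k, 0 < (-(lam k)).re) (b : ℕ → ℂ) {C : ℝ} (hCpos : 0 < C)
    (hC : ∀ Γ : Set ℕ, Γ.Nonempty →
        ∑' k : Γ, ENNReal.ofReal (‖b (k:ℕ)‖ ^ q) ≤
          ENNReal.ofReal C *
            ⨆ k : Γ, ENNReal.ofReal ((-(lam (k:ℕ))).re ^ (q*((p-1-α)/p)))) :
    lcBounded p q (fun t => t ^ α)
      (Measure.sum fun k : ℕ => (ENNReal.ofReal (‖b k‖ ^ q)) • Measure.dirac (-(lam k))) := by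
  have hp0 : (0:ℝ) < p := by linarith
  have hq0 : (0:ℝ) < q := by linarith
  have hq1 : (1:ℝ) ≤ q := by linarith
  set γ : ℝ := (p-1-α)/p with hγdef
  have hγ : 0 < γ := div_pos (by linarith) (by linarith)
  set β : ℝ := q * γ with hβdef
  have hβ : 0 < β := mul_pos hq0 hγ
  set Kw : ℝ := (2:ℝ) ^ (|(-α/(p-1))| / (p/(p-1))) with hKw
  set S : ℝ≥0∞ := ∑' i, aw γ i with hS
  have hSne : S ≠ ∞ := aw_sum_ne_top hγ
  set B : ℕ → ℝ≥0∞ := fun k => ENNReal.ofReal (‖b k‖ ^ q) with hB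
  set r : ℕ → ℝ := fun k => (-(lam k)).re with hr
  set nk : ℕ → ℤ := fun k => ⌊Real.logb 2 (r k)⌋ with hnk
  set E : ℝ≥0∞ := (ENNReal.ofReal Kw)^q * S^(q-1) *
    (ENNReal.ofReal C * ENNReal.ofReal ((2:ℝ)^β) * S) with hE
  have hEne : E ≠ ∞ := by
    rw [hE]
    apply ENNReal.mul_ne_top
    apply ENNReal.mul_ne_top
    · exact ENNReal.rpow_ne_top_of_nonneg hq0.le ENNReal.ofReal_ne_top
    · exact ENNReal.rpow_ne_top_of_nonneg (by linarith) hSne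
    apply ENNReal.mul_ne_top
    apply ENNReal.mul_ne_top
    · exact ENNReal.ofReal_ne_top
    · exact ENNReal.ofReal_ne_top
    · exact hSne
  refine ⟨(E^(1/q)).toReal + 1, by positivity, fun f hf => ?_⟩
  set I : ℝ≥0∞ := ∫⁻ t in Set.Ioi (0:ℝ), (‖f t‖₊ : ℝ≥0∞) ^ p * ENNReal.ofReal (t ^ α) with hI
  -- the central estimate
  have key : ∫⁻ z, (‖laplaceT f z‖₊ : ℝ≥0∞) ^ q
      ∂(Measure.sum fun k : ℕ => (ENNReal.ofReal (‖b k‖ ^ q)) • Measure.dirac (-(lam k)))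
      ≤ E * I ^ (q/p) := by
    rw [muInt b q lam (fun z => (‖laplaceT f z‖₊ : ℝ≥0∞) ^ q)]
    set W : ℤ → ℝ≥0∞ := fun j => (vj p α f j) ^ (q/p) with hW
    set D : ℝ≥0∞ := (ENNReal.ofReal Kw)^q * S^(q-1) with hD
    have hGle : ∀ k : ℕ, (‖laplaceT f (-(lam k))‖₊ : ℝ≥0∞) ^ q ≤
        D * ENNReal.ofReal ((2:ℝ)^(-((nk k):ℝ) * β)) *
          ∑' j, aw γ ((nk k) + j) * W j := by
      intro k
      have h1 : (‖laplaceT f (-(lam k))‖₊ : ℝ≥0∞) ^ q ≤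
          (∫⁻ t in Set.Ioi (0:ℝ), (‖f t‖₊ : ℝ≥0∞) *
            ENNReal.ofReal (Real.exp (-(t * (-(lam k)).re)))) ^ q :=
        ENNReal.rpow_le_rpow (laplace_ptwise f _) hq0.le
      have h2 := G_le hp hpq hα f hf (nk k) (r k) (dy_mem (r k) (hlam k)).1
      exact le_trans h1 h2
    have hsum1 : ∑' k, B k * (‖laplaceT f (-(lam k))‖₊ : ℝ≥0∞) ^ q ≤
        D * ∑' k, B k * (ENNReal.ofReal ((2:ℝ)^(-((nk k):ℝ) * β)) *
          ∑' j, aw γ ((nk k) + j) * W j) := by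
      rw [← ENNReal.tsum_mul_left]
      refine ENNReal.tsum_le_tsum fun k => ?_
      calc B k * (‖laplaceT f (-(lam k))‖₊ : ℝ≥0∞) ^ q
          ≤ B k * (D * ENNReal.ofReal ((2:ℝ)^(-((nk k):ℝ) * β)) *
            ∑' j, aw γ ((nk k) + j) * W j) := mul_le_mul_right (hGle k) _
        _ = D * (B k * (ENNReal.ofReal ((2:ℝ)^(-((nk k):ℝ) * β)) *
            ∑' j, aw γ ((nk k) + j) * W j)) := by ring
    -- swap sums
    have hsum2 : ∑' k, B k * (ENNReal.ofReal ((2:ℝ)^(-((nk k):ℝ) * β)) *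
        ∑' j, aw γ ((nk k) + j) * W j)
        = ∑' j, W j * ∑' k, B k * ENNReal.ofReal ((2:ℝ)^(-((nk k):ℝ) * β)) *
            aw γ ((nk k) + j) := by
      calc ∑' k, B k * (ENNReal.ofReal ((2:ℝ)^(-((nk k):ℝ) * β)) *
            ∑' j, aw γ ((nk k) + j) * W j)
          = ∑' k, ∑' j, B k * ENNReal.ofReal ((2:ℝ)^(-((nk k):ℝ) * β)) *
              aw γ ((nk k) + j) * W j := by
            congr 1; ext k
            rw [← ENNReal.tsum_mul_left, ← ENNReal.tsum_mul_left]
            congr 1; ext j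
            ring
        _ = ∑' j, ∑' k, B k * ENNReal.ofReal ((2:ℝ)^(-((nk k):ℝ) * β)) *
              aw γ ((nk k) + j) * W j := ENNReal.tsum_comm
        _ = ∑' j, W j * ∑' k, B k * ENNReal.ofReal ((2:ℝ)^(-((nk k):ℝ) * β)) *
              aw γ ((nk k) + j) := by
            congr 1; ext j
            rw [← ENNReal.tsum_mul_left]
            congr 1; ext k
            ring
    -- the Carleson bound for each j
    have hcarl : ∀ j : ℤ, (∑' k, B k * ENNReal.ofReal ((2:ℝ)^(-((nk k):ℝ) * β)) *
        aw γ ((nk k) + j)) ≤ ENNReal.ofReal C * ENNReal.ofReal ((2:ℝ)^β) * S := by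
      intro j
      set g : ℤ → ℝ≥0∞ := fun m => ENNReal.ofReal ((2:ℝ)^(-(m:ℝ) * β)) * aw γ (m + j)
        with hg
      have hsingle : ∀ k : ℕ, B k * ENNReal.ofReal ((2:ℝ)^(-((nk k):ℝ) * β)) *
          aw γ ((nk k) + j) = ∑' m : ℤ, (if nk k = m then B k * g m else 0) := by
        intro k
        rw [tsum_eq_single (nk k) (fun m hm => if_neg (fun h => hm h.symm))]
        rw [if_pos rfl, hg]
        ring
      calc ∑' k, B k * ENNReal.ofReal ((2:ℝ)^(-((nk k):ℝ) * β)) * aw γ ((nk k) + j)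
          = ∑' k, ∑' m : ℤ, (if nk k = m then B k * g m else 0) := by
            congr 1; ext k; exact hsingle k
        _ = ∑' m : ℤ, ∑' k, (if nk k = m then B k * g m else 0) := ENNReal.tsum_comm
        _ = ∑' m : ℤ, (∑' k, (if nk k = m then B k else 0)) * g m := by
            congr 1; ext m
            rw [← ENNReal.tsum_mul_right]
            congr 1; ext k
            by_cases h : nk k = m <;> simp [h]
        _ = ∑' m : ℤ, (∑' k : {k | nk k = m}, B k) * g m := by
            congr 1; ext m
            congr 1
            rw [tsum_subtype {k | nk k = m} B]
            congr 1; ext k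
            simp [Set.indicator_apply, Set.mem_setOf_eq]
        _ ≤ ∑' m : ℤ, (ENNReal.ofReal C * ENNReal.ofReal ((2:ℝ)^β)) * aw γ (m + j) := by
            refine ENNReal.tsum_le_tsum fun m => ?_
            rcases Set.eq_empty_or_nonempty {k | nk k = m} with he | hne
            · rw [he]
              simp [tsum_empty]
            · have hΓ := hC {k | nk k = m} hne
              have hsup : (⨆ k : {k | nk k = m},
                  ENNReal.ofReal ((-(lam (k:ℕ))).re ^ (q*((p-1-α)/p)))) ≤
                  ENNReal.ofReal ((dy (m+1)) ^ β) := by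
                refine iSup_le fun k => ?_
                have hk : (⌊Real.logb 2 (r (k:ℕ))⌋ : ℤ) = m := k.2
                have hlt : r (k:ℕ) < dy (m+1) := by
                  have h5 := (dy_mem (r (k:ℕ)) (hlam (k:ℕ))).2
                  rwa [hk] at h5
                exact ENNReal.ofReal_le_ofReal
                  (Real.rpow_le_rpow (hlam (k:ℕ)).le hlt.le hβ.le)
              have hm1 : (∑' k : {k | nk k = m}, B (k:ℕ)) ≤
                  ENNReal.ofReal C * ENNReal.ofReal ((dy (m+1)) ^ β) :=
                le_trans hΓ (mul_le_mul_right hsup _)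
              have hm2 : ENNReal.ofReal ((dy (m+1)) ^ β) * g m =
                  ENNReal.ofReal ((2:ℝ)^β) * aw γ (m + j) := by
                rw [hg]
                have e1 : (dy (m+1)) ^ β = (2:ℝ) ^ (((m:ℝ)+1) * β) := by
                  rw [dy_rpow, ← Real.rpow_mul (by norm_num : (0:ℝ) ≤ 2)]
                  push_cast
                  ring_nf
                have e2 : (2:ℝ) ^ (((m:ℝ)+1) * β) * (2:ℝ)^(-(m:ℝ) * β) = (2:ℝ)^β := by
                  rw [← Real.rpow_add two_pos]
                  congr 1
                  ring
                calc ENNReal.ofReal ((dy (m+1)) ^ β) *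
                      (ENNReal.ofReal ((2:ℝ)^(-(m:ℝ) * β)) * aw γ (m + j))
                    = (ENNReal.ofReal ((dy (m+1)) ^ β) *
                        ENNReal.ofReal ((2:ℝ)^(-(m:ℝ) * β))) * aw γ (m + j) := by ring
                  _ = ENNReal.ofReal ((2:ℝ)^β) * aw γ (m + j) := by
                      rw [← ENNReal.ofReal_mul (Real.rpow_pos_of_pos (dy_pos _) _).le, e1, e2]
              calc (∑' k : {k | nk k = m}, B (k:ℕ)) * g m
                  ≤ (ENNReal.ofReal C * ENNReal.ofReal ((dy (m+1)) ^ β)) * g m :=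
                    mul_le_mul_left hm1 _
                _ = ENNReal.ofReal C * (ENNReal.ofReal ((dy (m+1)) ^ β) * g m) := by ring
                _ = ENNReal.ofReal C * (ENNReal.ofReal ((2:ℝ)^β) * aw γ (m + j)) := by
                    rw [hm2]
                _ = (ENNReal.ofReal C * ENNReal.ofReal ((2:ℝ)^β)) * aw γ (m + j) := by ring
        _ = (ENNReal.ofReal C * ENNReal.ofReal ((2:ℝ)^β)) * ∑' m : ℤ, aw γ (m + j) :=
            ENNReal.tsum_mul_left
        _ = ENNReal.ofReal C * ENNReal.ofReal ((2:ℝ)^β) * S := by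
            congr 1
            calc ∑' m : ℤ, aw γ (m + j) = ∑' m : ℤ, aw γ (j + m) := by
                  congr 1; ext m; rw [add_comm]
              _ = S := aw_shift γ j
    -- put everything together
    have hWsum : ∑' j, W j ≤ I ^ (q/p) := by
      have h1 : (1:ℝ) ≤ q/p := by
        rw [le_div_iff₀ hp0]
        linarith
      calc ∑' j, W j ≤ (∑' j, vj p α f j) ^ (q/p) := tsum_rpow_le h1 _
        _ = I ^ (q/p) := by rw [hI, Ndecomp p α f]
    calc ∑' k, B k * (‖laplaceT f (-(lam k))‖₊ : ℝ≥0∞) ^ q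
        ≤ D * ∑' k, B k * (ENNReal.ofReal ((2:ℝ)^(-((nk k):ℝ) * β)) *
            ∑' j, aw γ ((nk k) + j) * W j) := hsum1
      _ = D * ∑' j, W j * ∑' k, B k * ENNReal.ofReal ((2:ℝ)^(-((nk k):ℝ) * β)) *
            aw γ ((nk k) + j) := by rw [hsum2]
      _ ≤ D * ∑' j, W j * (ENNReal.ofReal C * ENNReal.ofReal ((2:ℝ)^β) * S) := by
          exact mul_le_mul_right (ENNReal.tsum_le_tsum fun j =>
            mul_le_mul_right (hcarl j) _) _
      _ = D * ((ENNReal.ofReal C * ENNReal.ofReal ((2:ℝ)^β) * S) * ∑' j, W j) := by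
          rw [ENNReal.tsum_mul_right]
          ring
      _ ≤ D * ((ENNReal.ofReal C * ENNReal.ofReal ((2:ℝ)^β) * S) * I ^ (q/p)) :=
          mul_le_mul_right (mul_le_mul_right hWsum _) _
      _ = E * I ^ (q/p) := by rw [hE, hD]; ring
  -- conclude
  have hfin : (∫⁻ z, (‖laplaceT f z‖₊ : ℝ≥0∞) ^ q
      ∂(Measure.sum fun k : ℕ => (ENNReal.ofReal (‖b k‖ ^ q)) • Measure.dirac (-(lam k)))) ^ (1/q)
      ≤ E ^ (1/q) * I ^ (1/p) := by
    calc (∫⁻ z, (‖laplaceT f z‖₊ : ℝ≥0∞) ^ q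
        ∂(Measure.sum fun k : ℕ => (ENNReal.ofReal (‖b k‖ ^ q)) • Measure.dirac (-(lam k)))) ^ (1/q)
        ≤ (E * I ^ (q/p)) ^ (1/q) := ENNReal.rpow_le_rpow key (one_div_pos.mpr hq0).le
      _ = E ^ (1/q) * (I ^ (q/p)) ^ (1/q) :=
          ENNReal.mul_rpow_of_nonneg _ _ (one_div_pos.mpr hq0).le
      _ = E ^ (1/q) * I ^ (1/p) := by
          rw [← ENNReal.rpow_mul, show (q/p) * (1/q) = 1/p by field_simp]
  refine le_trans hfin ?_
  have hle : E ^ (1/q) ≤ ENNReal.ofReal ((E^(1/q)).toReal + 1) := by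
    have h1 : E ^ (1/q) ≠ ∞ := ENNReal.rpow_ne_top_of_nonneg (one_div_pos.mpr hq0).le hEne
    calc E ^ (1/q) = ENNReal.ofReal ((E^(1/q)).toReal) := (ENNReal.ofReal_toReal h1).symm
      _ ≤ ENNReal.ofReal ((E^(1/q)).toReal + 1) := ENNReal.ofReal_le_ofReal (by linarith)
  exact mul_le_mul_left hle _

lemma tsum_subtype_le' (f : ℕ → ℝ≥0∞) (s : Set ℕ) : ∑' k : s, f (k:ℕ) ≤ ∑' k, f k := by
  rw [tsum_subtype]
  exact ENNReal.tsum_le_tsum fun k => Set.indicator_le_self s f k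

lemma necessity {p q α : ℝ} (hp : 1 < p) (hpq : p ≤ q) (hα : α < p - 1)
    (lam : ℕ → ℂ) (hlam : ∀ k, 0 < (-(lam k)).re) (b : ℕ → ℂ)
    (θ : ℝ) (hθ0 : 0 < θ) (hθ : θ < Real.pi / 2)
    (hsector : ∀ k, |(-(lam k)).im| < (-(lam k)).re * Real.tan θ)
    {C : ℝ} (hCpos : 0 < C)
    (hb : ∀ f : ℝ → ℂ, Measurable f →
      (∫⁻ z, (‖laplaceT f z‖₊ : ℝ≥0∞) ^ q
        ∂(Measure.sum fun k : ℕ => (ENNReal.ofReal (‖b k‖ ^ q)) • Measure.dirac (-(lam k)))) ^ (1/q)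
        ≤ ENNReal.ofReal C * lpwNorm p (fun t => t ^ α) f) :
    ∃ C' > 0, ∀ Γ : Set ℕ, Γ.Nonempty →
      ∑' k : Γ, ENNReal.ofReal (‖b (k:ℕ)‖ ^ q) ≤
        ENNReal.ofReal C' *
          ⨆ k : Γ, ENNReal.ofReal ((-(lam (k:ℕ))).re ^ (q*((p-1-α)/p))) := by
  have hp0 : (0:ℝ) < p := by linarith
  have hq0 : (0:ℝ) < q := by linarith
  set γ : ℝ := (p-1-α)/p with hγdef
  have hγ : 0 < γ := div_pos (by linarith) (by linarith)
  set β : ℝ := q * γ with hβdef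
  have hβ : 0 < β := mul_pos hq0 hγ
  set r : ℕ → ℝ := fun k => (-(lam k)).re with hr
  set B : ℕ → ℝ≥0∞ := fun k => ENNReal.ofReal (‖b k‖ ^ q) with hB
  -- parameters of the test function
  set m : ℕ := ⌈|α|⌉₊ with hm
  have hmα : -α ≤ (m:ℝ) := le_trans (neg_le_abs α) (Nat.le_ceil _)
  have hmpα : 0 ≤ (m:ℝ) * p + α := by nlinarith [(by positivity : (0:ℝ) ≤ (m:ℝ))]
  have htan : 0 < Real.tan θ := Real.tan_pos_of_pos_of_lt_pi_div_two hθ0 hθ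
  set c : ℝ := min 1 ((Real.pi/3)/Real.tan θ) with hc
  have hc0 : 0 < c := lt_min one_pos (div_pos (div_pos Real.pi_pos (by norm_num)) htan)
  have hc1 : c ≤ 1 := min_le_left _ _
  have hctan : c * Real.tan θ ≤ Real.pi/3 := by
    have h1 : c ≤ (Real.pi/3)/Real.tan θ := min_le_right _ _
    calc c * Real.tan θ ≤ ((Real.pi/3)/Real.tan θ) * Real.tan θ :=
          mul_le_mul_of_nonneg_right h1 htan.le
      _ = Real.pi/3 := by field_simp
  set ec : ℝ := Real.exp (-1) / (2*((m:ℝ)+1)) with hec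
  have hec0 : 0 < ec := div_pos (Real.exp_pos _) (by positivity)
  set C' : ℝ := (C/ec)^q * c^(-β) with hC'
  have hC'0 : 0 < C' :=
    mul_pos (Real.rpow_pos_of_pos (div_pos hCpos hec0) q) (Real.rpow_pos_of_pos hc0 _)
  refine ⟨C', hC'0, fun Γ hne => ?_⟩
  set T : ℝ≥0∞ := ⨆ k : Γ, ENNReal.ofReal (r (k:ℕ) ^ β) with hT
  by_cases hTtop : T = ∞
  · rw [hTtop, ENNReal.mul_top (by simp [ENNReal.ofReal_eq_zero]; exact hC'0)]
    exact le_top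
  -- T finite: define s
  obtain ⟨k₀, hk₀⟩ := hne
  have hTk : ∀ k : Γ, ENNReal.ofReal (r (k:ℕ) ^ β) ≤ T :=
    fun k => le_iSup (fun k : Γ => ENNReal.ofReal (r (k:ℕ) ^ β)) k
  have hTr0 : 0 < T.toReal := by
    have h1 := ENNReal.toReal_mono hTtop (hTk ⟨k₀, hk₀⟩)
    rw [ENNReal.toReal_ofReal (Real.rpow_pos_of_pos (hlam k₀) β).le] at h1
    exact lt_of_lt_of_le (Real.rpow_pos_of_pos (hlam k₀) β) h1
  set s : ℝ := T.toReal ^ (1/β) with hs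
  have hs0 : 0 < s := Real.rpow_pos_of_pos hTr0 _
  have hsβ : s ^ β = T.toReal := by
    rw [hs, ← Real.rpow_mul hTr0.le, one_div_mul_cancel hβ.ne', Real.rpow_one]
  have hsT : ENNReal.ofReal (s ^ β) = T := by rw [hsβ, ENNReal.ofReal_toReal hTtop]
  have hrs : ∀ k ∈ Γ, r k ≤ s := by
    intro k hk
    have h1 : ENNReal.ofReal (r k ^ β) ≤ T := hTk ⟨k, hk⟩
    rw [ENNReal.ofReal_le_iff_le_toReal hTtop] at h1
    calc r k = (r k ^ β) ^ (1/β) := by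
          rw [← Real.rpow_mul (hlam k).le, mul_one_div_cancel hβ.ne', Real.rpow_one]
      _ ≤ T.toReal ^ (1/β) := Real.rpow_le_rpow (Real.rpow_pos_of_pos (hlam k) β).le h1
          (by positivity)
  set a : ℝ := c / s with ha
  have ha0 : 0 < a := div_pos hc0 hs0
  -- test function
  set F : ℝ → ℂ := fun t => Set.indicator (Set.Ioc (0:ℝ) a) (fun t => ((t:ℂ))^m) t with hF
  have hFmeas : Measurable F :=
    Measurable.indicator (Complex.measurable_ofReal.pow_const m) measurableSet_Ioc
  -- upper bound for the norm of the test function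
  have hIbound : ∫⁻ t in Set.Ioi (0:ℝ), (‖F t‖₊ : ℝ≥0∞) ^ p * ENNReal.ofReal (t ^ α)
      ≤ ENNReal.ofReal (a ^ ((m:ℝ)*p + α + 1)) := by
    have hsplit : (Set.Ioc (0:ℝ) a) ∪ (Set.Ioi a) = Set.Ioi 0 := Set.Ioc_union_Ioi_eq_Ioi ha0.le
    rw [← hsplit, lintegral_union measurableSet_Ioi (Set.Ioc_disjoint_Ioi le_rfl)]
    have hz : ∫⁻ t in Set.Ioi a, (‖F t‖₊ : ℝ≥0∞) ^ p * ENNReal.ofReal (t ^ α) = 0 := by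
      rw [setLIntegral_congr_fun measurableSet_Ioi
        (fun t ht => ?_), lintegral_zero]
      have hnot : t ∉ Set.Ioc (0:ℝ) a := fun hmem => absurd hmem.2 (not_le.mpr ht)
      have hFt : F t = 0 := Set.indicator_of_notMem hnot _
      rw [hFt]
      simp [ENNReal.zero_rpow_of_pos hp0]
    have hone : ∫⁻ t in Set.Ioc (0:ℝ) a, (‖F t‖₊ : ℝ≥0∞) ^ p * ENNReal.ofReal (t ^ α)
        ≤ ENNReal.ofReal (a ^ ((m:ℝ)*p + α + 1)) := by
      have hpt : ∀ t ∈ Set.Ioc (0:ℝ) a, (‖F t‖₊ : ℝ≥0∞) ^ p * ENNReal.ofReal (t ^ α)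
          ≤ ENNReal.ofReal (a ^ ((m:ℝ)*p + α)) := by
        intro t ht
        have ht0 : 0 < t := ht.1
        have hFt : F t = ((t:ℂ))^m := Set.indicator_of_mem ht _
        rw [hFt]
        have h1 : (‖((t:ℂ))^m‖₊ : ℝ≥0∞) = ENNReal.ofReal (t ^ ((m:ℝ))) := by
          rw [← (ofReal_norm _).trans (enorm_eq_nnnorm _), norm_pow, Complex.norm_real,
            Real.norm_eq_abs, abs_of_pos ht0, ← Real.rpow_natCast t m]
        rw [h1, ENNReal.ofReal_rpow_of_pos (Real.rpow_pos_of_pos ht0 _),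
          ← Real.rpow_mul ht0.le, ← ENNReal.ofReal_mul
            (Real.rpow_pos_of_pos ht0 _).le, ← Real.rpow_add ht0]
        exact ENNReal.ofReal_le_ofReal (Real.rpow_le_rpow ht0.le ht.2 hmpα)
      calc ∫⁻ t in Set.Ioc (0:ℝ) a, (‖F t‖₊ : ℝ≥0∞) ^ p * ENNReal.ofReal (t ^ α)
          ≤ ∫⁻ _ in Set.Ioc (0:ℝ) a, ENNReal.ofReal (a ^ ((m:ℝ)*p + α)) :=
            setLIntegral_mono measurable_const hpt
        _ = ENNReal.ofReal (a ^ ((m:ℝ)*p + α)) * volume (Set.Ioc (0:ℝ) a) :=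
            setLIntegral_const _ _
        _ = ENNReal.ofReal (a ^ ((m:ℝ)*p + α + 1)) := by
            rw [Real.volume_Ioc, sub_zero, ← ENNReal.ofReal_mul
              (Real.rpow_pos_of_pos ha0 _).le, Real.rpow_add_one ha0.ne']
    calc (∫⁻ t in Set.Ioc (0:ℝ) a, (‖F t‖₊ : ℝ≥0∞) ^ p * ENNReal.ofReal (t ^ α)) +
          ∫⁻ t in Set.Ioi a, (‖F t‖₊ : ℝ≥0∞) ^ p * ENNReal.ofReal (t ^ α)
        = ∫⁻ t in Set.Ioc (0:ℝ) a, (‖F t‖₊ : ℝ≥0∞) ^ p * ENNReal.ofReal (t ^ α) := by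
          rw [hz, add_zero]
      _ ≤ ENNReal.ofReal (a ^ ((m:ℝ)*p + α + 1)) := hone
  have hE1 : lpwNorm p (fun t => t ^ α) F ≤
      ENNReal.ofReal ((a ^ ((m:ℝ)*p + α + 1)) ^ (1/p)) := by
    rw [lpwNorm, ← ENNReal.ofReal_rpow_of_pos (Real.rpow_pos_of_pos ha0 _)]
    exact ENNReal.rpow_le_rpow hIbound (one_div_pos.mpr hp0).le
  -- lower bound for the Laplace transform at the points -lam k, k ∈ Γ
  have hlap : ∀ k, k ∈ Γ → ENNReal.ofReal (ec * a ^ ((m:ℝ)+1)) ≤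
      (‖laplaceT F (-(lam k))‖₊ : ℝ≥0∞) := by
    intro k hk
    set z : ℂ := -(lam k) with hz
    have hzre : z.re = r k := rfl
    have hzre0 : 0 < z.re := hlam k
    have hzres : z.re ≤ s := hrs k hk
    set G : ℝ → ℂ := fun t => ((t:ℂ))^m * Complex.exp (-(t:ℂ) * z) with hG
    have hGcont : Continuous G := by
      apply (Complex.continuous_ofReal.pow m).mul
      exact Complex.continuous_exp.comp (Complex.continuous_ofReal.neg.mul continuous_const)
    have hGint : IntegrableOn G (Set.Ioc 0 a) volume := hGcont.integrableOn_Ioc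
    have hlapeq : laplaceT F z = ∫ t in Set.Ioc (0:ℝ) a, G t := by
      rw [laplaceT]
      have hpt : ∀ t, F t * Complex.exp (-(t:ℂ) * z) = Set.indicator (Set.Ioc (0:ℝ) a) G t := by
        intro t
        by_cases h : t ∈ Set.Ioc (0:ℝ) a
        · have hFt : F t = ((t:ℂ))^m := Set.indicator_of_mem h _
          rw [Set.indicator_of_mem h, hFt]
        · have hFt : F t = 0 := Set.indicator_of_notMem h _
          rw [Set.indicator_of_notMem h, hFt, zero_mul]
      rw [setIntegral_congr_fun measurableSet_Ioi (fun t _ => hpt t),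
        setIntegral_indicator measurableSet_Ioc,
        Set.inter_eq_self_of_subset_right Set.Ioc_subset_Ioi_self]
    have hre : ∫ t in Set.Ioc (0:ℝ) a, (G t).re = (laplaceT F z).re := by
      rw [hlapeq]
      have h2 := integral_re (μ := volume.restrict (Set.Ioc (0:ℝ) a)) hGint
      simpa using h2
    have hGre : ∀ t ∈ Set.Ioc (0:ℝ) a, (Real.exp (-1)/2) * t^m ≤ (G t).re := by
      intro t ht
      have ht0 : 0 < t := ht.1
      have hre1 : (G t).re = t^m * (Real.exp (-(t * z.re)) * Real.cos (t * z.im)) := by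
        have hGt : G t = ((t:ℂ))^m * Complex.exp (-(t:ℂ) * z) := rfl
        rw [hGt]
        have e1 : ((t:ℂ))^m = (((t^m : ℝ)):ℂ) := by push_cast; ring
        rw [e1]
        rw [show ((((t^m:ℝ)):ℂ) * Complex.exp (-(t:ℂ) * z)).re
            = (t^m:ℝ) * (Complex.exp (-(t:ℂ) * z)).re by
          simp [Complex.mul_re, ← Complex.ofReal_pow], Complex.exp_re]
        have e2 : ((-(t:ℂ) * z).re) = -(t * z.re) := by
          simp [Complex.neg_re, Complex.mul_re]
        have e3 : ((-(t:ℂ) * z).im) = -(t * z.im) := by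
          simp [Complex.neg_im, Complex.mul_im]
        rw [e2, e3, Real.cos_neg]
      rw [hre1]
      have hb1 : t * z.re ≤ 1 := by
        calc t * z.re ≤ a * s := mul_le_mul ht.2 hzres hzre0.le ha0.le
          _ = c := by rw [ha]; field_simp
          _ ≤ 1 := hc1
      have hb2 : |t * z.im| ≤ Real.pi/3 := by
        have h3 : |z.im| ≤ z.re * Real.tan θ := (hsector k).le
        calc |t * z.im| = t * |z.im| := by rw [abs_mul, abs_of_pos ht0]
          _ ≤ a * (s * Real.tan θ) := by
            apply mul_le_mul ht.2 _ (abs_nonneg _) ha0.le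
            calc |z.im| ≤ z.re * Real.tan θ := h3
              _ ≤ s * Real.tan θ := mul_le_mul_of_nonneg_right hzres htan.le
          _ = c * Real.tan θ := by rw [ha]; field_simp
          _ ≤ Real.pi/3 := hctan
      have hb3 : Real.exp (-1) ≤ Real.exp (-(t * z.re)) := by
        apply Real.exp_le_exp.mpr
        linarith
      have hb4 : (1:ℝ)/2 ≤ Real.cos (t * z.im) := by
        calc (1:ℝ)/2 = Real.cos (Real.pi/3) := Real.cos_pi_div_three.symm
          _ ≤ Real.cos |t * z.im| := by
            apply Real.cos_le_cos_of_nonneg_of_le_pi (abs_nonneg _) _ hb2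
            linarith [Real.pi_pos]
          _ = Real.cos (t * z.im) := Real.cos_abs _
      have htm : (0:ℝ) ≤ t^m := by positivity
      have hexp0 : (0:ℝ) < Real.exp (-(t * z.re)) := Real.exp_pos _
      have h5 : Real.exp (-1) * (1/2) ≤ Real.exp (-(t * z.re)) * Real.cos (t * z.im) :=
        mul_le_mul hb3 hb4 (by norm_num) hexp0.le
      calc (Real.exp (-1)/2) * t^m = t^m * (Real.exp (-1) * (1/2)) := by ring
        _ ≤ t^m * (Real.exp (-(t * z.re)) * Real.cos (t * z.im)) :=
            mul_le_mul_of_nonneg_left h5 htm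
    have hintlb : ec * a ^ ((m:ℝ)+1) ≤ ∫ t in Set.Ioc (0:ℝ) a, (G t).re := by
      have hint1 : ∫ t in Set.Ioc (0:ℝ) a, ((Real.exp (-1)/2) * t^m) =
          (Real.exp (-1)/2) * (a^(m+1)/((m:ℝ)+1)) := by
        rw [MeasureTheory.integral_const_mul, ← intervalIntegral.integral_of_le ha0.le,
          integral_pow]
        norm_num
      have hmono : ∫ t in Set.Ioc (0:ℝ) a, ((Real.exp (-1)/2) * t^m) ≤
          ∫ t in Set.Ioc (0:ℝ) a, (G t).re := by
        apply setIntegral_mono_on _ hGint.re measurableSet_Ioc hGre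
        exact (continuous_const.mul (continuous_pow m)).integrableOn_Ioc
      have heq : ec * a ^ ((m:ℝ)+1) = (Real.exp (-1)/2) * (a^(m+1)/((m:ℝ)+1)) := by
        rw [hec]
        have : a ^ ((m:ℝ)+1) = a^(m+1) := by
          rw [show ((m:ℝ)+1) = (((m+1 : ℕ)):ℝ) by push_cast; ring, Real.rpow_natCast]
        rw [this]
        field_simp
      rw [heq]
      exact le_trans (le_of_eq rfl) (hint1 ▸ hmono)
    rw [← (ofReal_norm _).trans (enorm_eq_nnnorm _)]
    apply ENNReal.ofReal_le_ofReal
    calc ec * a ^ ((m:ℝ)+1) ≤ (laplaceT F z).re := by rw [← hre]; exact hintlb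
      _ ≤ ‖laplaceT F z‖ := Complex.re_le_norm _
      _ = ‖laplaceT F z‖ := rfl
  -- put things together
  have happ := hb F hFmeas
  set X : ℝ≥0∞ := ∫⁻ z, (‖laplaceT F z‖₊ : ℝ≥0∞) ^ q
    ∂(Measure.sum fun k : ℕ => (ENNReal.ofReal (‖b k‖ ^ q)) • Measure.dirac (-(lam k))) with hX
  have hXup : X ≤ ENNReal.ofReal ((C * (a ^ ((m:ℝ)*p + α + 1)) ^ (1/p))^q) := by
    have h1 : X = (X ^ (1/q)) ^ q := by
      rw [← ENNReal.rpow_mul, one_div_mul_cancel hq0.ne', ENNReal.rpow_one]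
    rw [h1, ← ENNReal.ofReal_rpow_of_pos
      (mul_pos hCpos (Real.rpow_pos_of_pos (Real.rpow_pos_of_pos ha0 _) _))]
    apply ENNReal.rpow_le_rpow _ hq0.le
    calc X ^ (1/q) ≤ ENNReal.ofReal C * lpwNorm p (fun t => t ^ α) F := happ
      _ ≤ ENNReal.ofReal C * ENNReal.ofReal ((a ^ ((m:ℝ)*p + α + 1)) ^ (1/p)) :=
          mul_le_mul_right hE1 _
      _ = ENNReal.ofReal (C * (a ^ ((m:ℝ)*p + α + 1)) ^ (1/p)) :=
          (ENNReal.ofReal_mul hCpos.le).symm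
  have hXlow : (∑' k : Γ, B (k:ℕ)) * ENNReal.ofReal ((ec * a ^ ((m:ℝ)+1))^q) ≤ X := by
    rw [hX, muInt b q lam (fun z => (‖laplaceT F z‖₊ : ℝ≥0∞) ^ q)]
    calc (∑' k : Γ, B (k:ℕ)) * ENNReal.ofReal ((ec * a ^ ((m:ℝ)+1))^q)
        = ∑' k : Γ, B (k:ℕ) * ENNReal.ofReal ((ec * a ^ ((m:ℝ)+1))^q) :=
          ENNReal.tsum_mul_right.symm
      _ ≤ ∑' k : Γ, B (k:ℕ) * (‖laplaceT F (-(lam (k:ℕ)))‖₊ : ℝ≥0∞) ^ q := by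
          refine ENNReal.tsum_le_tsum fun k => mul_le_mul_right ?_ _
          rw [← ENNReal.ofReal_rpow_of_pos
            (mul_pos hec0 (Real.rpow_pos_of_pos ha0 _))]
          exact ENNReal.rpow_le_rpow (hlap (k:ℕ) k.2) hq0.le
      _ ≤ ∑' k : ℕ, B k * (‖laplaceT F (-(lam k))‖₊ : ℝ≥0∞) ^ q :=
          tsum_subtype_le' (fun k => B k * (‖laplaceT F (-(lam k))‖₊ : ℝ≥0∞) ^ q) Γ
  -- divide
  have hden0 : (0:ℝ) < (ec * a ^ ((m:ℝ)+1))^q :=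
    Real.rpow_pos_of_pos (mul_pos hec0 (Real.rpow_pos_of_pos ha0 _)) _
  have hdiv : (∑' k : Γ, B (k:ℕ)) ≤
      ENNReal.ofReal ((C * (a ^ ((m:ℝ)*p + α + 1)) ^ (1/p))^q / (ec * a ^ ((m:ℝ)+1))^q) := by
    rw [ENNReal.ofReal_div_of_pos hden0]
    rw [ENNReal.le_div_iff_mul_le
      (Or.inl (by simp [ENNReal.ofReal_eq_zero, not_le]; exact hden0))
      (Or.inl ENNReal.ofReal_ne_top)]
    exact le_trans hXlow hXup
  -- final computation
  have hratio : (C * (a ^ ((m:ℝ)*p + α + 1)) ^ (1/p))^q / (ec * a ^ ((m:ℝ)+1))^q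
      = C' * s ^ β := by
    have e1 : (a ^ ((m:ℝ)*p + α + 1)) ^ (1/p) = a ^ (((m:ℝ)*p + α + 1)/p) := by
      rw [← Real.rpow_mul ha0.le]
      congr 1
      ring
    have e2 : (C * a ^ (((m:ℝ)*p + α + 1)/p))^q = C^q * a ^ ((((m:ℝ)*p + α + 1)/p)*q) := by
      rw [Real.mul_rpow hCpos.le (Real.rpow_pos_of_pos ha0 _).le, ← Real.rpow_mul ha0.le]
    have e3 : (ec * a ^ ((m:ℝ)+1))^q = ec^q * a ^ (((m:ℝ)+1)*q) := by
      rw [Real.mul_rpow hec0.le (Real.rpow_pos_of_pos ha0 _).le, ← Real.rpow_mul ha0.le]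
    have e4 : (((m:ℝ)*p + α + 1)/p)*q - ((m:ℝ)+1)*q = -β := by
      rw [hβdef, hγdef]
      field_simp
      ring
    have e5 : a ^ (-β) = c ^ (-β) * s ^ β := by
      rw [ha, Real.div_rpow hc0.le hs0.le, Real.rpow_neg hs0.le, div_eq_mul_inv, inv_inv]
    rw [e1, e2, e3, mul_div_mul_comm, ← Real.rpow_sub ha0, e4, e5,
      ← Real.div_rpow hCpos.le hec0.le, hC']
    ring
  calc (∑' k : Γ, B (k:ℕ)) ≤
      ENNReal.ofReal ((C * (a ^ ((m:ℝ)*p + α + 1)) ^ (1/p))^q / (ec * a ^ ((m:ℝ)+1))^q) := hdiv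
    _ = ENNReal.ofReal (C' * s ^ β) := by rw [hratio]
    _ = ENNReal.ofReal C' * ENNReal.ofReal (s ^ β) := ENNReal.ofReal_mul hC'0.le
    _ = ENNReal.ofReal C' * T := by rw [hsT]

end Suff

end Aux

/-- for eigenvalues `(λ_k)` with `-λ_k` in a sector `S(θ)` and
`μ = Σ_k |b_k|^q δ_{-λ_k}`, the Laplace–Carleson embedding
`𝔏 : L^p_{t^α}(0,∞) → L^q(ℂ₊,μ)` is bounded (i.e. the control operator is
`L^p_{t^α}`-admissible) iff
`Σ_{k∈Γ} |b_k|^q ≤ C sup_{k∈Γ} (Re(-λ_k))^{(q/p')(1-α/(p-1))}` for all `Γ ⊆ ℕ`. -/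
theorem laplace_carleson_diagonal_sectorial_iff
    (p q α : ℝ) (hp : 1 < p) (hpq : p ≤ q) (hα : α < p - 1)
    (lam : ℕ → ℂ) (hlam : ∀ k, (lam k).re < 0) (b : ℕ → ℂ)
    (θ : ℝ) (hθ0 : 0 < θ) (hθ : θ < Real.pi / 2)
    (hsector : ∀ k, |(-(lam k)).im| < (-(lam k)).re * Real.tan θ)
    (μ : Measure ℂ)
    (hμ : μ = Measure.sum fun k : ℕ =>
      (ENNReal.ofReal (‖b k‖ ^ q)) • Measure.dirac (-(lam k))) :
    lcBounded p q (fun t => t ^ α) μ ↔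
      ∃ C > 0, ∀ Γ : Set ℕ, Γ.Nonempty →
        ∑' k : Γ, ENNReal.ofReal (‖b (k : ℕ)‖ ^ q) ≤
          ENNReal.ofReal C *
            ⨆ k : Γ, ENNReal.ofReal
              ((-(lam (k : ℕ))).re ^ ((q / (p / (p - 1))) * (1 - α / (p - 1)))) := by
  have hexp : (q / (p / (p - 1))) * (1 - α / (p - 1)) = q * ((p-1-α)/p) := exp_rw p q α hp
  have hlam' : ∀ k, 0 < (-(lam k)).re := fun k => by
    simp only [Complex.neg_re]
    linarith [hlam k]
  subst hμ
  constructor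
  · rintro ⟨C, hC0, hC⟩
    obtain ⟨C', hC'0, hC'⟩ := necessity hp hpq hα lam hlam' b θ hθ0 hθ hsector hC0 hC
    refine ⟨C', hC'0, fun Γ hG => ?_⟩
    rw [hexp]
    exact hC' Γ hG
  · rintro ⟨C, hC0, hC⟩
    apply sufficiency hp hpq hα lam hlam' b hC0
    intro Γ hG
    have h1 := hC Γ hG
    rwa [hexp] at h1
end

section
/- Let μ := Σ_{n=1}^∞ (4ⁿ/n²) δ_{2ⁿ}, a positive Borel measure on ℂ₊ supported on the positive real axis (this measure arises from the parabolic diagonal system with λ_n = −2ⁿ and b_n = 2ⁿ/n). If α ≤ −1, then the Laplace–Carleson embedding 𝔏 : L²_{t^α}(0,∞) → L²(ℂ₊, μ) is bounded. -/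
open MeasureTheory Set Complex Filter ENNReal

/-- Weighted square norm (squared) of `f`. -/
noncomputable def lcNsq (α : ℝ) (f : ℝ → ℂ) : ℝ≥0∞ :=
  ∫⁻ t in Set.Ioi (0:ℝ), (‖f t‖₊ : ℝ≥0∞) ^ (2:ℝ) * ENNReal.ofReal (t ^ α)

/-- The auxiliary Gamma-type integral. -/
noncomputable def lcJint (α s : ℝ) : ℝ≥0∞ :=
  ∫⁻ t in Set.Ioi (0:ℝ), ENNReal.ofReal (t ^ (-α) * Real.exp (-(2*s*t)))

lemma lc_laplace_CS (α : ℝ) (f : ℝ → ℂ) (hf : Measurable f) {s : ℝ} (hs : 0 < s) :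
    (‖laplaceT f ((s : ℝ) : ℂ)‖₊ : ℝ≥0∞) ^ (2:ℝ) ≤ lcNsq α f * lcJint α s := by
  set F : ℝ → ℝ≥0∞ := fun t => (‖f t‖₊ : ℝ≥0∞) * ENNReal.ofReal (t ^ (α/2)) with hF
  set G : ℝ → ℝ≥0∞ := fun t => ENNReal.ofReal (t ^ (-(α/2)) * Real.exp (-(s*t))) with hG
  have hFm : Measurable F :=
    (measurable_coe_nnreal_ennreal.comp hf.nnnorm).mul
      ((measurable_id.pow measurable_const).ennreal_ofReal)
  have hGm : Measurable G :=
    (((measurable_id.pow measurable_const).mul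
      ((Real.measurable_exp.comp (measurable_const.mul measurable_id).neg))).ennreal_ofReal)
  have key : (‖laplaceT f ((s : ℝ) : ℂ)‖₊ : ℝ≥0∞) ≤
      (lcNsq α f) ^ (1/(2:ℝ)) * (lcJint α s) ^ (1/(2:ℝ)) := by
    calc (‖laplaceT f ((s : ℝ) : ℂ)‖₊ : ℝ≥0∞)
        ≤ ∫⁻ t in Set.Ioi (0:ℝ), ‖f t * Complex.exp (-(t : ℂ) * ((s:ℝ):ℂ))‖₊ := by
          rw [laplaceT]; exact enorm_integral_le_lintegral_enorm _
      _ = ∫⁻ t in Set.Ioi (0:ℝ), (F * G) t := by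
          refine setLIntegral_congr_fun measurableSet_Ioi (fun t ht => ?_)
          have ht : (0:ℝ) < t := ht
          have he : (-(t:ℂ) * ((s:ℝ):ℂ)) = ((-(s*t) : ℝ) : ℂ) := by push_cast; ring
          have hnorm : ‖f t * Complex.exp (-(t : ℂ) * ((s:ℝ):ℂ))‖
              = ‖f t‖ * Real.exp (-(s*t)) := by
            rw [norm_mul, he]
            simp [Complex.norm_exp]
          have h1 : t ^ (α/2) * (t ^ (-(α/2)) * Real.exp (-(s*t))) = Real.exp (-(s*t)) := by
            rw [← mul_assoc, ← Real.rpow_add ht]; norm_num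
          calc (‖f t * Complex.exp (-(t : ℂ) * ((s:ℝ):ℂ))‖₊ : ℝ≥0∞)
              = ENNReal.ofReal (‖f t‖ * Real.exp (-(s*t))) := by
                rw [← enorm_eq_nnnorm, ← ofReal_norm, hnorm]
            _ = (F * G) t := by
                simp only [Pi.mul_apply, hF, hG, ← enorm_eq_nnnorm, ← ofReal_norm]
                rw [mul_assoc, ← ENNReal.ofReal_mul (by positivity), h1,
                  ← ENNReal.ofReal_mul (norm_nonneg _)]
      _ ≤ (∫⁻ t in Set.Ioi (0:ℝ), F t ^ (2:ℝ)) ^ (1/(2:ℝ)) *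
          (∫⁻ t in Set.Ioi (0:ℝ), G t ^ (2:ℝ)) ^ (1/(2:ℝ)) :=
        ENNReal.lintegral_mul_le_Lp_mul_Lq _ ⟨by norm_num, by norm_num, by norm_num⟩
          hFm.aemeasurable hGm.aemeasurable
      _ = (lcNsq α f) ^ (1/(2:ℝ)) * (lcJint α s) ^ (1/(2:ℝ)) := by
          congr 1
          · congr 1
            refine setLIntegral_congr_fun measurableSet_Ioi (fun t ht => ?_)
            have ht : (0:ℝ) < t := ht
            rw [hF]
            rw [ENNReal.mul_rpow_of_nonneg _ _ (by norm_num : (0:ℝ) ≤ 2),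
              ENNReal.ofReal_rpow_of_nonneg (Real.rpow_nonneg ht.le _) (by norm_num),
              ← Real.rpow_mul ht.le]
            norm_num
          · congr 1
            refine setLIntegral_congr_fun measurableSet_Ioi (fun t ht => ?_)
            have ht : (0:ℝ) < t := ht
            rw [hG, ENNReal.ofReal_rpow_of_nonneg (by positivity) (by norm_num),
              Real.mul_rpow (by positivity) (Real.exp_nonneg _),
              ← Real.rpow_mul ht.le, ← Real.exp_mul]
            norm_num
            ring_nf
  calc (‖laplaceT f ((s : ℝ) : ℂ)‖₊ : ℝ≥0∞) ^ (2:ℝ)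
      ≤ ((lcNsq α f) ^ (1/(2:ℝ)) * (lcJint α s) ^ (1/(2:ℝ))) ^ (2:ℝ) :=
        ENNReal.rpow_le_rpow key (by norm_num)
    _ = lcNsq α f * lcJint α s := by
        rw [ENNReal.mul_rpow_of_nonneg _ _ (by norm_num : (0:ℝ) ≤ 2),
          ← ENNReal.rpow_mul, ← ENNReal.rpow_mul]
        norm_num

lemma lcJint_eq (α : ℝ) (hα : α ≤ -1) {s : ℝ} (hs : 0 < s) :
    lcJint α s = ENNReal.ofReal ((1/(2*s)) ^ (1-α) * Real.Gamma (1-α)) := by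
  have hint : IntegrableOn (fun t : ℝ => t ^ (-α) * Real.exp (-(2*s*t))) (Set.Ioi 0) := by
    have := integrableOn_rpow_mul_exp_neg_mul_rpow (s := -α) (p := 1) (b := 2*s)
      (by linarith) (by norm_num) (by linarith)
    simpa [Real.rpow_one, mul_assoc] using this
  have hnn : 0 ≤ᵐ[volume.restrict (Set.Ioi (0:ℝ))]
      fun t : ℝ => t ^ (-α) * Real.exp (-(2*s*t)) := by
    refine (ae_restrict_iff' measurableSet_Ioi).mpr (ae_of_all _ fun t ht => ?_)
    have ht : (0:ℝ) < t := ht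
    positivity
  rw [lcJint, ← ofReal_integral_eq_lintegral_ofReal hint hnn]
  congr 1
  have := Real.integral_rpow_mul_exp_neg_mul_Ioi (a := 1-α) (r := 2*s)
    (by linarith) (by linarith)
  rw [← this]
  refine setIntegral_congr_fun measurableSet_Ioi fun t ht => ?_
  have h1 : (1:ℝ) - α - 1 = -α := by ring
  rw [h1]

lemma lc_aux_summable : Summable (fun n : ℕ => 1 / ((n : ℝ) + 1) ^ 2) := by
  have h : Summable (fun n : ℕ => 1 / (n : ℝ) ^ 2) :=
    Real.summable_one_div_nat_pow.mpr one_lt_two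
  have := (summable_nat_add_iff 1).mpr h
  refine this.congr fun n => ?_
  push_cast
  ring

lemma lc_aux_pow_le_one (α : ℝ) (hα : α ≤ -1) (n : ℕ) :
    (4:ℝ)^(n+1) * (1/(2*(2:ℝ)^(n+1)))^(1-α) ≤ 1 := by
  have e1 : (4:ℝ)^(n+1) = (2:ℝ) ^ ((2*(n+1) : ℕ) : ℝ) := by
    rw [Real.rpow_natCast, pow_mul]; norm_num
  have e2 : (1/(2*(2:ℝ)^(n+1))) = (2:ℝ) ^ (-(((n+2 : ℕ)) : ℝ)) := by
    rw [Real.rpow_neg (by norm_num : (0:ℝ) ≤ 2), Real.rpow_natCast, one_div]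
    congr 1; ring
  rw [e1, e2, ← Real.rpow_mul (by norm_num : (0:ℝ) ≤ 2),
    ← Real.rpow_add (by norm_num : (0:ℝ) < 2)]
  apply Real.rpow_le_one_of_one_le_of_nonpos one_le_two
  push_cast
  nlinarith [mul_nonneg (by positivity : (0:ℝ) ≤ (n:ℝ)+2) (by linarith : (0:ℝ) ≤ -1 - α)]

/-- for the parabolic diagonal system measure
`μ = Σ_{n≥1} (4ⁿ/n²) δ_{2ⁿ}`, if `α ≤ -1` then the Laplace–Carleson embedding
`𝔏 : L²_{t^α}(0,∞) → L²(ℂ₊,μ)` is bounded. -/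
theorem parabolic_system_weighted_admissible
    (α : ℝ) (hα : α ≤ -1)
    (μ : Measure ℂ)
    (hμ : μ = Measure.sum fun n : ℕ =>
      (ENNReal.ofReal ((4 : ℝ) ^ (n + 1) / ((n : ℝ) + 1) ^ 2)) •
        Measure.dirac ((2 : ℂ) ^ (n + 1))) :
    lcBounded 2 2 (fun t => t ^ α) μ := by
  classical
  set Γ := Real.Gamma (1 - α) with hΓdef
  have hΓ : 0 ≤ Γ := Real.Gamma_nonneg_of_nonneg (by linarith)
  set S := ∑' n : ℕ, 1 / ((n : ℝ) + 1) ^ 2 with hSdef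
  have hS : 0 ≤ S := tsum_nonneg fun n => by positivity
  set C := Real.sqrt (Γ * S) + 1 with hCdef
  have hC : 0 < C := by positivity
  refine ⟨C, hC, fun f hf => ?_⟩
  subst hμ
  have hterm : ∀ n : ℕ,
      ENNReal.ofReal ((4:ℝ)^(n+1) / ((n:ℝ)+1)^2) *
          (‖laplaceT f ((2:ℂ)^(n+1))‖₊ : ℝ≥0∞) ^ (2:ℝ)
        ≤ lcNsq α f * ENNReal.ofReal (Γ * (1 / ((n:ℝ)+1)^2)) := by
    intro n
    have hsn : (0:ℝ) < 2^(n+1) := by positivity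
    have hpt : ((2:ℂ)^(n+1)) = (((2:ℝ)^(n+1) : ℝ) : ℂ) := by push_cast; ring
    have h1 : (‖laplaceT f ((2:ℂ)^(n+1))‖₊ : ℝ≥0∞) ^ (2:ℝ)
        ≤ lcNsq α f * lcJint α (2^(n+1)) := by
      rw [hpt]; exact lc_laplace_CS α f hf hsn
    have h2 : ENNReal.ofReal ((4:ℝ)^(n+1) / ((n:ℝ)+1)^2) * lcJint α (2^(n+1))
        ≤ ENNReal.ofReal (Γ * (1 / ((n:ℝ)+1)^2)) := by
      rw [lcJint_eq α hα hsn, ← ENNReal.ofReal_mul (by positivity)]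
      apply ENNReal.ofReal_le_ofReal
      have hp := lc_aux_pow_le_one α hα n
      have hu : (0:ℝ) < ((n:ℝ)+1)^2 := by positivity
      set X := (1/(2*(2:ℝ)^(n+1)))^(1-α) with hXdef
      have hX : (0:ℝ) ≤ X := Real.rpow_nonneg (by positivity) _
      have key : (4:ℝ)^(n+1)*X*Γ ≤ Γ := by
        nlinarith [mul_le_mul_of_nonneg_right hp hΓ]
      calc (4:ℝ)^(n+1) / ((n:ℝ)+1)^2 * (X * Γ)
          = ((4:ℝ)^(n+1)*X*Γ) / ((n:ℝ)+1)^2 := by ring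
        _ ≤ Γ / ((n:ℝ)+1)^2 := by gcongr
        _ = Γ * (1 / ((n:ℝ)+1)^2) := by ring
    calc ENNReal.ofReal ((4:ℝ)^(n+1) / ((n:ℝ)+1)^2) *
            (‖laplaceT f ((2:ℂ)^(n+1))‖₊ : ℝ≥0∞) ^ (2:ℝ)
        ≤ ENNReal.ofReal ((4:ℝ)^(n+1) / ((n:ℝ)+1)^2) *
            (lcNsq α f * lcJint α (2^(n+1))) := mul_le_mul_right h1 _
      _ = lcNsq α f * (ENNReal.ofReal ((4:ℝ)^(n+1) / ((n:ℝ)+1)^2) *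
            lcJint α (2^(n+1))) := by ring
      _ ≤ lcNsq α f * ENNReal.ofReal (Γ * (1 / ((n:ℝ)+1)^2)) := mul_le_mul_right h2 _
  have main : (∫⁻ z, (‖laplaceT f z‖₊ : ℝ≥0∞) ^ (2:ℝ) ∂(Measure.sum fun n : ℕ =>
      (ENNReal.ofReal ((4 : ℝ) ^ (n + 1) / ((n : ℝ) + 1) ^ 2)) •
        Measure.dirac ((2 : ℂ) ^ (n + 1))))
      ≤ lcNsq α f * ENNReal.ofReal (Γ * S) := by
    rw [lintegral_sum_measure]
    simp_rw [lintegral_smul_measure, lintegral_dirac]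
    calc ∑' n : ℕ, ENNReal.ofReal ((4:ℝ)^(n+1) / ((n:ℝ)+1)^2) *
            (‖laplaceT f ((2:ℂ)^(n+1))‖₊ : ℝ≥0∞) ^ (2:ℝ)
        ≤ ∑' n : ℕ, lcNsq α f * ENNReal.ofReal (Γ * (1 / ((n:ℝ)+1)^2)) :=
          ENNReal.summable.tsum_le_tsum hterm ENNReal.summable
      _ = lcNsq α f * ∑' n : ℕ, ENNReal.ofReal (Γ * (1 / ((n:ℝ)+1)^2)) :=
          ENNReal.tsum_mul_left
      _ = lcNsq α f * ENNReal.ofReal (Γ * S) := by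
          rw [← ENNReal.ofReal_tsum_of_nonneg (fun n => by positivity)
            (lc_aux_summable.mul_left Γ), tsum_mul_left]
  have hfin : ENNReal.ofReal (Γ * S) ^ (1/(2:ℝ)) ≤ ENNReal.ofReal C := by
    have hle : Γ * S ≤ C^2 := by
      nlinarith [Real.sq_sqrt (mul_nonneg hΓ hS), Real.sqrt_nonneg (Γ*S)]
    calc ENNReal.ofReal (Γ * S) ^ (1/(2:ℝ))
        ≤ (ENNReal.ofReal (C^2)) ^ (1/(2:ℝ)) :=
          ENNReal.rpow_le_rpow (ENNReal.ofReal_le_ofReal hle) (by norm_num)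
      _ = ENNReal.ofReal C := by
          rw [ENNReal.ofReal_pow hC.le, ← ENNReal.rpow_natCast, ← ENNReal.rpow_mul]
          norm_num
  calc (∫⁻ z, (‖laplaceT f z‖₊ : ℝ≥0∞) ^ (2:ℝ) ∂(Measure.sum fun n : ℕ =>
        (ENNReal.ofReal ((4 : ℝ) ^ (n + 1) / ((n : ℝ) + 1) ^ 2)) •
          Measure.dirac ((2 : ℂ) ^ (n + 1)))) ^ (1/(2:ℝ))
      ≤ (lcNsq α f * ENNReal.ofReal (Γ * S)) ^ (1/(2:ℝ)) :=
        ENNReal.rpow_le_rpow main (by norm_num)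
    _ = lcNsq α f ^ (1/(2:ℝ)) * ENNReal.ofReal (Γ * S) ^ (1/(2:ℝ)) :=
        ENNReal.mul_rpow_of_nonneg _ _ (by norm_num)
    _ ≤ lcNsq α f ^ (1/(2:ℝ)) * ENNReal.ofReal C := mul_le_mul_right hfin _
    _ = ENNReal.ofReal C * lpwNorm 2 (fun t => t ^ α) f := by
        rw [mul_comm]; rfl
end

section
/- Let μ := Σ_{n=1}^∞ (4ⁿ/n²) δ_{2ⁿ}, a positive Borel measure on ℂ₊ supported on the positive real axis. If −1 < α < 1, then the Laplace–Carleson embedding 𝔏 : L²_{t^α}(0,∞) → L²(ℂ₊, μ) is NOT bounded; that is, there is no constant C > 0 with (∫_{ℂ₊} |𝔏f|² dμ)^{1/2} ≤ C ‖f‖_{L²_{t^α}} for all f ∈ L²_{t^α}(0,∞). -/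
open MeasureTheory Set Complex Filter ENNReal

lemma lap_ind (b : ℝ) (hb : 0 < b) (z : ℂ) (hz : z ≠ 0) :
    laplaceT (Set.indicator (Set.Ioo 0 b) (fun _ => (1:ℂ))) z
      = (Complex.exp (-z * b) - 1) / (-z) := by
  unfold laplaceT
  have h1 : ∀ t : ℝ, (Set.indicator (Set.Ioo 0 b) (fun _ => (1:ℂ))) t
      * Complex.exp (-(t : ℂ) * z)
      = (Set.Ioo 0 b).indicator (fun t : ℝ => Complex.exp (-z * t)) t := by
    intro t
    by_cases ht : t ∈ Set.Ioo 0 b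
    · simp [Set.indicator_of_mem ht]
      ring_nf
    · simp [Set.indicator_of_notMem ht]
  simp_rw [h1]
  rw [MeasureTheory.setIntegral_indicator measurableSet_Ioo,
    Set.inter_eq_right.mpr Set.Ioo_subset_Ioi_self,
    ← MeasureTheory.integral_Ioc_eq_integral_Ioo,
    ← intervalIntegral.integral_of_le hb.le,
    integral_exp_mul_complex (neg_ne_zero.mpr hz)]
  simp

lemma lap_val (n : ℕ) :
    laplaceT (Set.indicator (Set.Ioo 0 ((2:ℝ)^(n+1))⁻¹) (fun _ => (1:ℂ))) ((2:ℂ)^(n+1))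
      = (((1 - Real.exp (-1)) / 2^(n+1) : ℝ) : ℂ) := by
  rw [lap_ind _ (by positivity) _ (pow_ne_zero _ two_ne_zero)]
  have h2 : (-(2:ℂ)^(n+1)) * ((((2:ℝ)^(n+1))⁻¹ : ℝ) : ℂ) = -1 := by
    push_cast
    field_simp
  rw [h2]
  have h3 : Complex.exp (-1) = ((Real.exp (-1) : ℝ) : ℂ) := by
    rw [Complex.ofReal_exp]; norm_num
  rw [h3]
  push_cast
  have h4 : ((2:ℂ)^(n+1)) ≠ 0 := pow_ne_zero _ two_ne_zero
  field_simp
  ring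


/-- for the parabolic diagonal system measure
`μ = Σ_{n≥1} (4ⁿ/n²) δ_{2ⁿ}`, if `-1 < α < 1` then the Laplace–Carleson embedding
`𝔏 : L²_{t^α}(0,∞) → L²(ℂ₊,μ)` is NOT bounded. -/
theorem parabolic_system_weighted_not_admissible
    (α : ℝ) (hα1 : -1 < α) (hα2 : α < 1)
    (μ : Measure ℂ)
    (hμ : μ = Measure.sum fun n : ℕ =>
      (ENNReal.ofReal ((4 : ℝ) ^ (n + 1) / ((n : ℝ) + 1) ^ 2)) •
        Measure.dirac ((2 : ℂ) ^ (n + 1))) :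
    ¬ lcBounded 2 2 (fun t => t ^ α) μ := by
  rintro ⟨C, hC, hbound⟩
  subst hμ
  set c0 : ℝ := 1 - Real.exp (-1) with hc0def
  have hc0 : 0 < c0 := by
    have h := Real.exp_lt_one_iff.mpr (by norm_num : (-1:ℝ) < 0)
    simp only [hc0def]; linarith
  have hα1' : 0 < α + 1 := by linarith
  set s : ℝ := (2:ℝ) ^ (-(α+1)/2) with hsdef
  have hs0 : 0 < s := Real.rpow_pos_of_pos two_pos _
  have hs1 : s < 1 := by
    rw [hsdef]
    exact Real.rpow_lt_one_of_one_lt_of_neg one_lt_two (by linarith)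
  -- the key pointwise inequality
  have key : ∀ n : ℕ, c0 / ((n:ℝ)+1) ≤ C * (s^(n+1) / Real.sqrt (α+1)) := by
    intro n
    set b : ℝ := ((2:ℝ)^(n+1))⁻¹ with hbdef
    have hb : 0 < b := by positivity
    set f : ℝ → ℂ := Set.indicator (Set.Ioo 0 b) (fun _ => (1:ℂ)) with hfdef
    have hf : Measurable f := measurable_const.indicator measurableSet_Ioo
    have hb2 := hbound f hf
    set r : ℝ := c0 / 2^(n+1) with hrdef
    have hr : 0 < r := by positivity
    -- LHS lower bound
    have hval : laplaceT f ((2:ℂ)^(n+1)) = ((r : ℝ) : ℂ) := by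
      rw [hfdef, lap_val n]
    have hlap : (‖laplaceT f ((2:ℂ)^(n+1))‖₊ : ℝ≥0∞) ^ (2:ℝ) = ENNReal.ofReal (r^2) := by
      rw [hval, Complex.nnnorm_real,
        show ((‖r‖₊ : ℝ≥0∞)) = ENNReal.ofReal r from by
          rw [← enorm_eq_nnnorm, ← ofReal_norm, Real.norm_of_nonneg hr.le],
        ENNReal.ofReal_rpow_of_nonneg hr.le (by norm_num : (0:ℝ) ≤ 2),
        Real.rpow_two]
    have hint : (∫⁻ z, (‖laplaceT f z‖₊ : ℝ≥0∞) ^ (2:ℝ)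
        ∂(Measure.sum fun n : ℕ => (ENNReal.ofReal ((4 : ℝ) ^ (n + 1) / ((n : ℝ) + 1) ^ 2)) •
          Measure.dirac ((2 : ℂ) ^ (n + 1))))
        = ∑' m : ℕ, ENNReal.ofReal ((4 : ℝ) ^ (m + 1) / ((m : ℝ) + 1) ^ 2) *
            (‖laplaceT f ((2:ℂ)^(m+1))‖₊ : ℝ≥0∞) ^ (2:ℝ) := by
      rw [MeasureTheory.lintegral_sum_measure]
      congr 1
      ext m
      rw [MeasureTheory.lintegral_smul_measure, MeasureTheory.lintegral_dirac, smul_eq_mul]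
    have hterm : ENNReal.ofReal ((4 : ℝ) ^ (n + 1) / ((n : ℝ) + 1) ^ 2) *
        (‖laplaceT f ((2:ℂ)^(n+1))‖₊ : ℝ≥0∞) ^ (2:ℝ)
        = ENNReal.ofReal (c0^2 / ((n:ℝ)+1)^2) := by
      rw [hlap, ← ENNReal.ofReal_mul (by positivity)]
      congr 1
      rw [hrdef]
      have h4 : (4:ℝ)^(n+1) = ((2:ℝ)^(n+1))^2 := by
        rw [← pow_mul, mul_comm, pow_mul]; norm_num
      rw [h4]
      field_simp
    have hlow : ENNReal.ofReal (c0^2 / ((n:ℝ)+1)^2) ^ (1/2 : ℝ)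
        ≤ (∫⁻ z, (‖laplaceT f z‖₊ : ℝ≥0∞) ^ (2:ℝ)
        ∂(Measure.sum fun n : ℕ => (ENNReal.ofReal ((4 : ℝ) ^ (n + 1) / ((n : ℝ) + 1) ^ 2)) •
          Measure.dirac ((2 : ℂ) ^ (n + 1)))) ^ (1/2 : ℝ) := by
      apply ENNReal.rpow_le_rpow _ (by norm_num)
      rw [hint, ← hterm]
      exact ENNReal.le_tsum n
    -- RHS computation
    have hnorm : lpwNorm 2 (fun t => t ^ α) f
        = ENNReal.ofReal (b ^ (α+1) / (α+1)) ^ (1/2 : ℝ) := by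
      unfold lpwNorm
      congr 1
      have h1 : ∀ t : ℝ, (‖f t‖₊ : ℝ≥0∞) ^ (2:ℝ) * ENNReal.ofReal (t ^ α)
          = (Set.Ioo 0 b).indicator (fun t => ENNReal.ofReal (t ^ α)) t := by
        intro t
        by_cases ht : t ∈ Set.Ioo 0 b
        · simp [hfdef, Set.indicator_of_mem ht]
        · simp [hfdef, Set.indicator_of_notMem ht,
            ENNReal.zero_rpow_of_pos (by norm_num : (0:ℝ) < 2)]
      simp_rw [h1]
      rw [MeasureTheory.lintegral_indicator measurableSet_Ioo,
        MeasureTheory.Measure.restrict_restrict measurableSet_Ioo,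
        Set.inter_eq_left.mpr Set.Ioo_subset_Ioi_self]
      have hInt : IntegrableOn (fun t : ℝ => t ^ α) (Set.Ioo 0 b) := by
        have := (intervalIntegral.intervalIntegrable_rpow' (a := 0) (b := b) hα1)
        rw [intervalIntegrable_iff_integrableOn_Ioc_of_le hb.le] at this
        exact this.mono_set Set.Ioo_subset_Ioc_self
      rw [← MeasureTheory.ofReal_integral_eq_lintegral_ofReal hInt
        ((ae_restrict_iff' measurableSet_Ioo).2 (Filter.Eventually.of_forall
          fun t ht => Real.rpow_nonneg ht.1.le α))]
      congr 1
      rw [← MeasureTheory.integral_Ioc_eq_integral_Ioo,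
        ← intervalIntegral.integral_of_le hb.le,
        integral_rpow (Or.inl hα1)]
      rw [Real.zero_rpow (by linarith : α + 1 ≠ 0)]
      ring
    -- combine, pass to reals
    have hcomb := le_trans hlow hb2
    rw [hnorm] at hcomb
    rw [ENNReal.ofReal_rpow_of_nonneg (by positivity) (by norm_num : (0:ℝ) ≤ 1/2),
      ENNReal.ofReal_rpow_of_nonneg (by positivity) (by norm_num : (0:ℝ) ≤ 1/2),
      ← ENNReal.ofReal_mul hC.le] at hcomb
    have hreal : (c0^2 / ((n:ℝ)+1)^2) ^ (1/2:ℝ) ≤ C * ((b ^ (α+1) / (α+1)) ^ (1/2:ℝ)) :=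
      (ENNReal.ofReal_le_ofReal_iff (by positivity)).1 hcomb
    -- simplify LHS
    have hL : (c0^2 / ((n:ℝ)+1)^2) ^ (1/2:ℝ) = c0 / ((n:ℝ)+1) := by
      rw [← Real.sqrt_eq_rpow, ← Real.sqrt_sq (by positivity : (0:ℝ) ≤ c0/((n:ℝ)+1)),
        div_pow]
    -- simplify RHS
    have hR : (b ^ (α+1) / (α+1)) ^ (1/2:ℝ) = s^(n+1) / Real.sqrt (α+1) := by
      have hbpow : b ^ (α+1) = (2:ℝ) ^ (-(((n:ℝ)+1)) * (α+1)) := by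
        rw [hbdef, ← Real.rpow_natCast (2:ℝ) (n+1), ← Real.rpow_neg (by norm_num),
          ← Real.rpow_mul (by norm_num)]
        push_cast
        ring_nf
      rw [Real.div_rpow (by positivity) hα1'.le, hbpow,
        ← Real.rpow_mul (by norm_num), ← Real.sqrt_eq_rpow]
      congr 1
      rw [hsdef, ← Real.rpow_natCast ((2:ℝ) ^ (-(α+1)/2)) (n+1),
        ← Real.rpow_mul (by norm_num)]
      push_cast
      ring_nf
    rw [hL, hR] at hreal
    exact hreal
  -- derive contradiction
  have hK : ∀ n : ℕ, c0 ≤ (C / Real.sqrt (α+1)) * (((n:ℝ)+1) * s^(n+1)) := by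
    intro n
    have h := key n
    have hn : (0:ℝ) < (n:ℝ)+1 := by positivity
    rw [div_le_iff₀ hn] at h
    calc c0 ≤ C * (s^(n+1) / Real.sqrt (α+1)) * ((n:ℝ)+1) := h
      _ = (C / Real.sqrt (α+1)) * (((n:ℝ)+1) * s^(n+1)) := by ring
  have htend : Tendsto (fun n : ℕ => (C / Real.sqrt (α+1)) * (((n:ℝ)+1) * s^(n+1)))
      atTop (nhds 0) := by
    have h1 : Tendsto (fun n : ℕ => ((n:ℝ))^1 * s^n) atTop (nhds 0) :=
      (summable_pow_mul_geometric_of_norm_lt_one (R := ℝ) 1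
        (by rw [Real.norm_eq_abs, abs_of_pos hs0]; exact hs1)).tendsto_atTop_zero
    have h2 : Tendsto (fun n : ℕ => ((n:ℝ)+1) * s^(n+1)) atTop (nhds 0) := by
      have h := h1.comp (tendsto_add_atTop_nat 1)
      apply h.congr
      intro a
      simp [Function.comp]
    have h3 := h2.const_mul (C / Real.sqrt (α+1))
    simpa using h3
  have hev := htend.eventually_lt_const hc0
  rcases hev.exists with ⟨n, hn⟩
  exact absurd (hK n) (not_le.mpr hn)
end
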